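/- arXiv:2501.04705 — 5 statements merged into one kernel-verified Lean document; each statement's English description precedes it below -/
import Mathlib

section
/- There exists a continuous surjective map 𝒫 : [0,1] → [0,1]^2 satisfying the Hölder condition ‖𝒫(t) − 𝒫(s)‖ ≤ M·|t−s|^{1/2} for all s, t ∈ [0,1], for some constant M. -/
namespace SpaceFill
def cellA (q : ℕ) : ℤ × ℤ :=
  if q = 0 then (0, 0) else if q = 1 then (0, 1) else if q = 2 then (1, 1) else (1, 0)
def orA (q : ℕ) : Bool × Bool :=
  if q = 0 then (true, false) else if q = 3 then (true, true) else (false, false)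
def tw (s r : Bool) (m : ℤ) (p : ℤ × ℤ) : ℤ × ℤ :=
  if r then (m - 1 - (if s then p.2 else p.1), m - 1 - (if s then p.1 else p.2))
  else ((if s then p.2 else p.1), (if s then p.1 else p.2))
def hil : ℕ → ℕ → Bool → Bool → ℤ × ℤ
  | 0, _, _, _ => (0, 0)
  | n+1, k, s, r =>
    (2 ^ n * (tw s r 2 (cellA (k / 4 ^ n % 4))).1 +
       (hil n (k % 4 ^ n) (xor s (orA (k / 4 ^ n % 4)).1) (xor r (orA (k / 4 ^ n % 4)).2)).1,
     2 ^ n * (tw s r 2 (cellA (k / 4 ^ n % 4))).2 +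
       (hil n (k % 4 ^ n) (xor s (orA (k / 4 ^ n % 4)).1) (xor r (orA (k / 4 ^ n % 4)).2)).2)
lemma hil_succ (n k : ℕ) (s r : Bool) : hil (n+1) k s r =
    (2 ^ n * (tw s r 2 (cellA (k / 4 ^ n % 4))).1 +
       (hil n (k % 4 ^ n) (xor s (orA (k / 4 ^ n % 4)).1) (xor r (orA (k / 4 ^ n % 4)).2)).1,
     2 ^ n * (tw s r 2 (cellA (k / 4 ^ n % 4))).2 +
       (hil n (k % 4 ^ n) (xor s (orA (k / 4 ^ n % 4)).1) (xor r (orA (k / 4 ^ n % 4)).2)).2) := rfl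
lemma tw_bounds (s r : Bool) (q : ℕ) :
    0 ≤ (tw s r 2 (cellA q)).1 ∧ (tw s r 2 (cellA q)).1 ≤ 1 ∧
    0 ≤ (tw s r 2 (cellA q)).2 ∧ (tw s r 2 (cellA q)).2 ≤ 1 := by
  have h : q = 0 ∨ q = 1 ∨ q = 2 ∨ (q ≠ 0 ∧ q ≠ 1 ∧ q ≠ 2 ∧ q ≠ 3) ∨ q = 3 := by omega
  rcases s <;> rcases r <;>
    rcases h with h | h | h | ⟨h0, h1, h2, h3⟩ | h <;>
    simp_all [cellA, tw]
lemma hil_range (n : ℕ) : ∀ k s r,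
    0 ≤ (hil n k s r).1 ∧ (hil n k s r).1 < 2 ^ n ∧
    0 ≤ (hil n k s r).2 ∧ (hil n k s r).2 < 2 ^ n := by
  induction n with
  | zero => intro k s r; simp [hil]
  | succ n ih =>
    intro k s r
    rw [hil_succ]
    dsimp only
    obtain ⟨h1, h2, h3, h4⟩ := ih (k % 4 ^ n) (xor s (orA (k / 4 ^ n % 4)).1) (xor r (orA (k / 4 ^ n % 4)).2)
    obtain ⟨t1, t2, t3, t4⟩ := tw_bounds s r (k / 4 ^ n % 4)
    have hpow : (0:ℤ) < 2 ^ n := by positivity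
    have hp : (2:ℤ) ^ (n+1) = 2 * 2 ^ n := by ring
    constructor
    · nlinarith
    refine ⟨by nlinarith, by nlinarith, by nlinarith⟩

lemma hil_zero (n : ℕ) : ∀ s r : Bool,
    hil n 0 s r = if r then ((2:ℤ) ^ n - 1, (2:ℤ) ^ n - 1) else (0, 0) := by
  induction n with
  | zero => intro s r; rcases r <;> simp [hil]
  | succ n ih =>
    intro s r
    rw [hil_succ]
    simp only [Nat.zero_div, Nat.zero_mod]
    rw [ih (xor s (orA 0).1) (xor r (orA 0).2)]
    rcases s <;> rcases r <;> simp [orA, cellA, tw] <;>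
      first
      | ring
      | (constructor <;> ring)
lemma hil_last (n : ℕ) : ∀ s r : Bool,
    hil n (4 ^ n - 1) s r = if xor s r then ((0:ℤ), (2:ℤ) ^ n - 1) else ((2:ℤ) ^ n - 1, 0) := by
  induction n with
  | zero => intro s r; rcases s <;> rcases r <;> simp [hil]
  | succ n ih =>
    intro s r
    have hm : 0 < 4 ^ n := by positivity
    have hrep : 4 ^ (n+1) - 1 = 4 ^ n * 3 + (4 ^ n - 1) := by
      rw [pow_succ]; omega
    have hdiv : (4 ^ (n+1) - 1) / 4 ^ n % 4 = 3 := by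
      rw [hrep, Nat.mul_add_div hm, Nat.div_eq_of_lt (by omega)]
    have hmod : (4 ^ (n+1) - 1) % 4 ^ n = 4 ^ n - 1 := by
      rw [hrep, Nat.mul_add_mod, Nat.mod_eq_of_lt (by omega)]
    rw [hil_succ, hdiv, hmod, ih]
    rcases s <;> rcases r <;> simp [orA, cellA, tw] <;>
      first
      | ring
      | (constructor <;> ring)

lemma hil_nest (n : ℕ) : ∀ k s r,
    (hil n (k/4) s r).1 * 2 ≤ (hil (n+1) k s r).1 ∧
    (hil (n+1) k s r).1 ≤ (hil n (k/4) s r).1 * 2 + 1 ∧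
    (hil n (k/4) s r).2 * 2 ≤ (hil (n+1) k s r).2 ∧
    (hil (n+1) k s r).2 ≤ (hil n (k/4) s r).2 * 2 + 1 := by
  induction n with
  | zero =>
    intro k s r
    rw [hil_succ]
    simp only [pow_zero, one_mul, Nat.div_one]
    obtain ⟨t1, t2, t3, t4⟩ := tw_bounds s r (k % 4)
    simp only [hil]
    refine ⟨by linarith, by linarith, by linarith, by linarith⟩
  | succ n ih =>
    intro k s r
    have hq : k / 4 / 4 ^ n = k / 4 ^ (n+1) := by
      rw [Nat.div_div_eq_div_mul, ← pow_succ']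
    have hc : (k % 4 ^ (n+1)) / 4 = (k/4) % 4 ^ n := by
      rw [pow_succ']
      exact Nat.mod_mul_right_div_self k 4 (4 ^ n)
    rw [hil_succ (n+1) k s r, hil_succ n (k/4) s r, hq]
    dsimp only
    obtain ⟨h1, h2, h3, h4⟩ := ih (k % 4 ^ (n+1))
      (xor s (orA (k / 4 ^ (n+1) % 4)).1) (xor r (orA (k / 4 ^ (n+1) % 4)).2)
    rw [hc] at h1 h2 h3 h4
    have e1 : ((2:ℤ) ^ (n+1)) * (tw s r 2 (cellA (k / 4 ^ (n+1) % 4))).1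
        = 2 * (2 ^ n * (tw s r 2 (cellA (k / 4 ^ (n+1) % 4))).1) := by ring
    have e2 : ((2:ℤ) ^ (n+1)) * (tw s r 2 (cellA (k / 4 ^ (n+1) % 4))).2
        = 2 * (2 ^ n * (tw s r 2 (cellA (k / 4 ^ (n+1) % 4))).2) := by ring
    refine ⟨by linarith, by linarith, by linarith, by linarith⟩

lemma hil_adj (n : ℕ) : ∀ k s r, k + 1 < 4 ^ n →
    |(hil n (k+1) s r).1 - (hil n k s r).1| ≤ 1 ∧
    |(hil n (k+1) s r).2 - (hil n k s r).2| ≤ 1 := by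
  induction n with
  | zero => intro k s r h; simp at h
  | succ n ih =>
    intro k s r hk
    have hm : 0 < 4 ^ n := by positivity
    have hb : k % 4 ^ n < 4 ^ n := Nat.mod_lt _ hm
    have hd : 4 ^ n * (k / 4 ^ n) + k % 4 ^ n = k := Nat.div_add_mod k (4 ^ n)
    by_cases hbc : k % 4 ^ n + 1 < 4 ^ n
    · -- same quadrant
      have d1 : (k+1) / 4 ^ n = k / 4 ^ n := by
        have : k + 1 = 4 ^ n * (k / 4 ^ n) + (k % 4 ^ n + 1) := by omega
        rw [this, Nat.mul_add_div hm, Nat.div_eq_of_lt hbc, Nat.add_zero]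
      have m1 : (k+1) % 4 ^ n = k % 4 ^ n + 1 := by
        have : k + 1 = 4 ^ n * (k / 4 ^ n) + (k % 4 ^ n + 1) := by omega
        rw [this, Nat.mul_add_mod, Nat.mod_eq_of_lt hbc]
      rw [hil_succ n (k+1) s r, hil_succ n k s r, d1, m1]
      dsimp only
      have := ih (k % 4 ^ n) (xor s (orA (k / 4 ^ n % 4)).1) (xor r (orA (k / 4 ^ n % 4)).2) hbc
      refine ⟨?_, ?_⟩ <;> simp only [add_sub_add_left_eq_sub]
      exacts [this.1, this.2]
    · -- crossing quadrants
      have hbe : k % 4 ^ n = 4 ^ n - 1 := by omega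
      have hk1 : k + 1 = 4 ^ n * (k / 4 ^ n + 1) := by
        rw [Nat.mul_add, Nat.mul_one]; omega
      have ha3 : k / 4 ^ n + 1 < 4 := by
        have h4 : (4:ℕ) ^ (n+1) = 4 ^ n * 4 := by rw [pow_succ]
        by_contra hcon
        push_neg at hcon
        have : 4 ^ n * 4 ≤ 4 ^ n * (k / 4 ^ n + 1) := Nat.mul_le_mul_left _ hcon
        omega
      have d1 : (k+1) / 4 ^ n = k / 4 ^ n + 1 := by
        rw [hk1, Nat.mul_div_cancel_left _ hm]
      have m1 : (k+1) % 4 ^ n = 0 := by rw [hk1, Nat.mul_mod_right]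
      have dmod : k / 4 ^ n % 4 = k / 4 ^ n := Nat.mod_eq_of_lt (by omega)
      have dmod1 : (k / 4 ^ n + 1) % 4 = k / 4 ^ n + 1 := Nat.mod_eq_of_lt ha3
      rw [hil_succ n (k+1) s r, hil_succ n k s r, d1, m1, hbe, dmod, dmod1,
        hil_zero, hil_last]
      have hpow : (1:ℤ) ≤ 2 ^ n := one_le_pow₀ (by norm_num)
      have ha : k / 4 ^ n = 0 ∨ k / 4 ^ n = 1 ∨ k / 4 ^ n = 2 := by omega
      rcases ha with ha | ha | ha <;> rw [ha] <;> rcases s <;> rcases r <;>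
        simp [orA, cellA, tw] <;>
        constructor <;> rw [abs_le] <;> constructor <;> linarith

lemma tw_invol (s r : Bool) (p : ℤ × ℤ) : tw s r 2 (tw s r 2 p) = p := by
  rcases s <;> rcases r <;> simp [tw, Prod.ext_iff] <;> constructor <;> ring

lemma tw_mem (s r : Bool) (c : ℤ × ℤ) (h1 : c.1 = 0 ∨ c.1 = 1) (h2 : c.2 = 0 ∨ c.2 = 1) :
    ((tw s r 2 c).1 = 0 ∨ (tw s r 2 c).1 = 1) ∧ ((tw s r 2 c).2 = 0 ∨ (tw s r 2 c).2 = 1) := by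
  rcases s <;> rcases r <;> simp [tw] <;> omega

lemma cellA_surj (c : ℤ × ℤ) (h1 : c.1 = 0 ∨ c.1 = 1) (h2 : c.2 = 0 ∨ c.2 = 1) :
    ∃ q, q < 4 ∧ cellA q = c := by
  obtain ⟨x, y⟩ := c
  dsimp at h1 h2
  rcases h1 with h1 | h1 <;> rcases h2 with h2 | h2 <;> subst h1 <;> subst h2
  · exact ⟨0, by norm_num, by simp [cellA]⟩
  · exact ⟨1, by norm_num, by simp [cellA]⟩
  · exact ⟨3, by norm_num, by simp [cellA]⟩
  · exact ⟨2, by norm_num, by simp [cellA]⟩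

lemma hil_cover (n : ℕ) : ∀ (s r : Bool) (x y : ℤ), 0 ≤ x → x < 2 ^ n → 0 ≤ y → y < 2 ^ n →
    ∃ k, k < 4 ^ n ∧ hil n k s r = (x, y) := by
  induction n with
  | zero =>
    intro s r x y h1 h2 h3 h4
    refine ⟨0, by norm_num, ?_⟩
    simp only [hil, Prod.ext_iff]
    norm_num at h2 h4 ⊢
    omega
  | succ n ih =>
    intro s r x y hx0 hx1 hy0 hy1
    have hm : 0 < 4 ^ n := by positivity
    have hp : (2:ℤ) ^ (n+1) = 2 * 2 ^ n := by ring
    set c1 : ℤ := if 2 ^ n ≤ x then 1 else 0 with hc1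
    set c2 : ℤ := if 2 ^ n ≤ y then 1 else 0 with hc2
    have hb1 : 0 ≤ x - 2 ^ n * c1 ∧ x - 2 ^ n * c1 < 2 ^ n := by
      rw [hc1]; split_ifs with h <;> constructor <;> linarith
    have hb2 : 0 ≤ y - 2 ^ n * c2 ∧ y - 2 ^ n * c2 < 2 ^ n := by
      rw [hc2]; split_ifs with h <;> constructor <;> linarith
    have hm1 : c1 = 0 ∨ c1 = 1 := by rw [hc1]; split_ifs <;> simp
    have hm2 : c2 = 0 ∨ c2 = 1 := by rw [hc2]; split_ifs <;> simp
    obtain ⟨q, hq4, hqc⟩ := cellA_surj (tw s r 2 (c1, c2)) (tw_mem s r _ hm1 hm2).1 (tw_mem s r _ hm1 hm2).2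
    have hqtw : tw s r 2 (cellA q) = (c1, c2) := by rw [hqc, tw_invol]
    obtain ⟨k', hk', hhil⟩ := ih (xor s (orA q).1) (xor r (orA q).2)
      (x - 2 ^ n * c1) (y - 2 ^ n * c2) hb1.1 hb1.2 hb2.1 hb2.2
    refine ⟨4 ^ n * q + k', ?_, ?_⟩
    · have h3 : q ≤ 3 := by omega
      have : 4 ^ n * q ≤ 4 ^ n * 3 := Nat.mul_le_mul_left _ h3
      have h4 : (4:ℕ) ^ (n+1) = 4 ^ n * 4 := by rw [pow_succ]
      omega
    · have hdv : (4 ^ n * q + k') / 4 ^ n % 4 = q := by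
        rw [Nat.mul_add_div hm, Nat.div_eq_of_lt hk', Nat.add_zero, Nat.mod_eq_of_lt hq4]
      have hmd : (4 ^ n * q + k') % 4 ^ n = k' := by
        rw [Nat.mul_add_mod, Nat.mod_eq_of_lt hk']
      rw [hil_succ, hdv, hmd, hhil, hqtw]
      simp only [Prod.ext_iff]
      constructor <;> ring

noncomputable def idx (n : ℕ) (t : ℝ) : ℕ := min ⌊(4:ℝ) ^ n * t⌋₊ (4 ^ n - 1)

noncomputable def capp (n : ℕ) (t : ℝ) : ℝ × ℝ :=
  (((hil n (idx n t) false false).1 : ℝ) / 2 ^ n,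
   ((hil n (idx n t) false false).2 : ℝ) / 2 ^ n)

lemma idx_lt (n : ℕ) (t : ℝ) : idx n t < 4 ^ n := by
  have : 0 < (4:ℕ) ^ n := by positivity
  have h := min_le_right ⌊(4:ℝ) ^ n * t⌋₊ (4 ^ n - 1)
  unfold idx
  omega

lemma idx_div (n : ℕ) (t : ℝ) : idx (n+1) t / 4 = idx n t := by
  have h1 : ⌊(4:ℝ) ^ (n+1) * t⌋₊ / 4 = ⌊(4:ℝ) ^ n * t⌋₊ := by
    rw [← Nat.floor_div_natCast]
    congr 1
    push_cast
    ring
  have h0 : 0 < (4:ℕ) ^ n := by positivity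
  have h2 : ((4:ℕ) ^ (n+1) - 1) / 4 = 4 ^ n - 1 := by
    have : (4:ℕ) ^ (n+1) = 4 ^ n * 4 := by rw [pow_succ]
    omega
  unfold idx
  rcases le_total ⌊(4:ℝ) ^ (n+1) * t⌋₊ ((4:ℕ) ^ (n+1) - 1) with h | h
  · rw [min_eq_left h, ← h1, ← h2, min_eq_left (Nat.div_le_div_right h)]
  · rw [min_eq_right h, ← h1, ← h2, min_eq_right (Nat.div_le_div_right h)]

lemma capp_mem (n : ℕ) (t : ℝ) :
    0 ≤ (capp n t).1 ∧ (capp n t).1 ≤ 1 ∧ 0 ≤ (capp n t).2 ∧ (capp n t).2 ≤ 1 := by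
  obtain ⟨h1, h2, h3, h4⟩ := hil_range n (idx n t) false false
  have hp : (0:ℝ) < 2 ^ n := by positivity
  have c1 : (0:ℝ) ≤ ((hil n (idx n t) false false).1 : ℝ) := by exact_mod_cast h1
  have c2 : ((hil n (idx n t) false false).1 : ℝ) ≤ 2 ^ n := by
    have : ((hil n (idx n t) false false).1 : ℝ) < ((2:ℤ) ^ n : ℤ) := by exact_mod_cast h2
    push_cast at this
    linarith
  have c3 : (0:ℝ) ≤ ((hil n (idx n t) false false).2 : ℝ) := by exact_mod_cast h3
  have c4 : ((hil n (idx n t) false false).2 : ℝ) ≤ 2 ^ n := by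
    have : ((hil n (idx n t) false false).2 : ℝ) < ((2:ℤ) ^ n : ℤ) := by exact_mod_cast h4
    push_cast at this
    linarith
  unfold capp
  refine ⟨by positivity, ?_, by positivity, ?_⟩ <;> rw [div_le_one hp]
  exacts [c2, c4]

lemma capp_step (n : ℕ) (t : ℝ) : dist (capp (n+1) t) (capp n t) ≤ (1/2) ^ (n+1) := by
  have hnest := hil_nest n (idx (n+1) t) false false
  rw [idx_div] at hnest
  obtain ⟨h1, h2, h3, h4⟩ := hnest
  have key : ∀ X x : ℤ, x * 2 ≤ X → X ≤ x * 2 + 1 →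
      dist ((X:ℝ)/2^(n+1)) ((x:ℝ)/2^n) ≤ (1/2)^(n+1) := by
    intro X x hA hB
    have hp : (0:ℝ) < 2 ^ (n+1) := by positivity
    have hpn : (0:ℝ) < 2 ^ n := by positivity
    have e : (X:ℝ)/2^(n+1) - (x:ℝ)/2^n = ((X - 2*x : ℤ) : ℝ)/2^(n+1) := by
      push_cast
      rw [pow_succ]
      field_simp
    rw [Real.dist_eq, e, abs_div, abs_of_pos hp]
    have hb : |((X - 2*x : ℤ) : ℝ)| ≤ 1 := by
      have hge : (0:ℝ) ≤ ((X - 2*x : ℤ) : ℝ) := by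
        have : (0:ℤ) ≤ X - 2*x := by linarith
        exact_mod_cast this
      have hle : ((X - 2*x : ℤ) : ℝ) ≤ 1 := by
        have : (X - 2*x : ℤ) ≤ 1 := by linarith
        exact_mod_cast this
      rw [abs_of_nonneg hge]; exact hle
    have hpow : ((1:ℝ)/2) ^ (n+1) = 1 / 2 ^ (n+1) := by rw [div_pow, one_pow]
    rw [hpow]
    gcongr
  rw [Prod.dist_eq]
  apply max_le
  · exact key _ _ h1 h2
  · exact key _ _ h3 h4

lemma capp_tail (t : ℝ) (n p : ℕ) :
    dist (capp n t) (capp (n + p) t) ≤ (1/2:ℝ)^n - (1/2)^(n+p) := by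
  induction p with
  | zero => simp
  | succ p ih =>
    have step := capp_step (n + p) t
    have e : (1/2:ℝ)^(n+p+1) = (1/2)^(n+p) * (1/2) := pow_succ _ _
    calc dist (capp n t) (capp (n+p+1) t)
        ≤ dist (capp n t) (capp (n+p) t) + dist (capp (n+p) t) (capp (n+p+1) t) :=
          dist_triangle _ _ _
      _ ≤ ((1/2)^n - (1/2)^(n+p)) + (1/2)^(n+p+1) := by
          refine add_le_add ih ?_
          rw [dist_comm]
          exact step
      _ ≤ (1/2)^n - (1/2)^(n+(p+1)) := by
          rw [show n + (p+1) = n + p + 1 by ring]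
          linarith
end SpaceFill


open SpaceFill in
/-- There exists a continuous surjection `𝒫` from `[0,1]` onto the unit square
which is Hölder of exponent `1/2`: `‖𝒫 t - 𝒫 s‖ ≤ M * |t - s| ^ (1/2)`. -/
theorem exists_holder_space_filling_curve :
    ∃ (P : ℝ → ℝ × ℝ) (M : ℝ),
      ContinuousOn P (Set.Icc (0 : ℝ) 1) ∧
      P '' Set.Icc (0 : ℝ) 1 = Set.Icc (0 : ℝ) 1 ×ˢ Set.Icc (0 : ℝ) 1 ∧
      ∀ s ∈ Set.Icc (0 : ℝ) 1, ∀ t ∈ Set.Icc (0 : ℝ) 1,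
        ‖P t - P s‖ ≤ M * |t - s| ^ ((1 : ℝ) / 2) := by
  classical
  have hcauchy : ∀ t : ℝ, ∃ L, Filter.Tendsto (fun n => capp n t) Filter.atTop (nhds L) := by
    intro t
    apply cauchySeq_tendsto_of_complete
    apply cauchySeq_of_le_geometric (1/2 : ℝ) 1 (by norm_num)
    intro n
    rw [dist_comm, one_mul]
    calc dist (capp (n+1) t) (capp n t) ≤ (1/2)^(n+1) := capp_step n t
      _ ≤ (1/2)^n := pow_le_pow_of_le_one (by norm_num) (by norm_num) (Nat.le_succ n)
  choose P hP using hcauchy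
  have hPd : ∀ t n, dist (P t) (capp n t) ≤ (1/2:ℝ)^n := by
    intro t n
    have hshift : Filter.Tendsto (fun p => capp (n + p) t) Filter.atTop (nhds (P t)) := by
      have := (hP t).comp (Filter.tendsto_add_atTop_nat n)
      simpa [Function.comp_def, Nat.add_comm] using this
    have hlim : Filter.Tendsto (fun p => dist (capp n t) (capp (n + p) t))
        Filter.atTop (nhds (dist (capp n t) (P t))) :=
      Filter.Tendsto.dist tendsto_const_nhds hshift
    rw [dist_comm]
    apply le_of_tendsto hlim
    filter_upwards with p
    have := capp_tail t n p
    have hnn : (0:ℝ) ≤ (1/2:ℝ)^(n+p) := by positivity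
    linarith
  have hadj2 : ∀ n : ℕ, ∀ u v : ℝ, 0 ≤ u → u ≤ v → v ≤ 1 → v - u ≤ (1/4:ℝ)^n →
      dist (capp n v) (capp n u) ≤ (1/2:ℝ)^n := by
    intro n u v hu huv hv1 hd
    have h4 : (0:ℝ) < 4^n := by positivity
    have hidx_le : idx n u ≤ idx n v := by
      unfold idx
      have : ⌊(4:ℝ)^n * u⌋₊ ≤ ⌊(4:ℝ)^n * v⌋₊ := Nat.floor_mono (by nlinarith)
      omega
    have hidx_ge : idx n v ≤ idx n u + 1 := by
      have h1 : (4:ℝ)^n * v ≤ 4^n * u + 1 := by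
        have hmul : (4:ℝ)^n * (v - u) ≤ 4^n * (1/4)^n :=
          mul_le_mul_of_nonneg_left hd (le_of_lt h4)
        have h2 : (4:ℝ)^n * (1/4)^n = 1 := by
          rw [← mul_pow]; norm_num
        nlinarith
      have hfl : ⌊(4:ℝ)^n * v⌋₊ ≤ ⌊(4:ℝ)^n * u⌋₊ + 1 := by
        calc ⌊(4:ℝ)^n * v⌋₊ ≤ ⌊(4:ℝ)^n * u + 1⌋₊ := Nat.floor_mono h1
          _ = ⌊(4:ℝ)^n * u⌋₊ + 1 := Nat.floor_add_one (by positivity)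
      unfold idx
      omega
    rcases eq_or_lt_of_le hidx_le with heq | hlt
    · unfold capp
      rw [← heq]
      simp only [dist_self]
      positivity
    · have hvi : idx n v = idx n u + 1 := by omega
      have hlt4 : idx n u + 1 < 4^n := by have := idx_lt n v; omega
      obtain ⟨a1, a2⟩ := hil_adj n (idx n u) false false hlt4
      rw [← hvi] at a1 a2
      have hcomp : ∀ X Y : ℤ, |X - Y| ≤ 1 → dist ((X:ℝ)/2^n) ((Y:ℝ)/2^n) ≤ (1/2:ℝ)^n := by
        intro X Y h
        have hp : (0:ℝ) < 2^n := by positivity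
        have e : (X:ℝ)/2^n - (Y:ℝ)/2^n = ((X - Y : ℤ):ℝ)/2^n := by push_cast; ring
        rw [Real.dist_eq, e, abs_div, abs_of_pos hp]
        have hb : |((X - Y : ℤ):ℝ)| ≤ 1 := by
          rw [← Int.cast_abs]
          exact_mod_cast h
        have hpow : ((1:ℝ)/2)^n = 1/2^n := by rw [div_pow, one_pow]
        rw [hpow]
        gcongr
      unfold capp
      rw [Prod.dist_eq]
      exact max_le (hcomp _ _ a1) (hcomp _ _ a2)
  have hold : ∀ u v : ℝ, u ∈ Set.Icc (0:ℝ) 1 → v ∈ Set.Icc (0:ℝ) 1 → u ≤ v →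
      dist (P v) (P u) ≤ 6 * Real.sqrt (v - u) := by
    intro u v hu hv huv
    rcases eq_or_lt_of_le huv with heq | hlt
    · rw [← heq]
      simp only [dist_self]
      positivity
    · have hex : ∃ m : ℕ, (1/4:ℝ)^(m+1) < v - u := by
        obtain ⟨m, hm⟩ := exists_pow_lt_of_lt_one (show (0:ℝ) < v - u by linarith)
          (show (1/4:ℝ) < 1 by norm_num)
        exact ⟨m, lt_of_le_of_lt
          (pow_le_pow_of_le_one (by norm_num) (by norm_num) (Nat.le_succ m)) hm⟩
      set n := Nat.find hex with hn
      have hlow : (1/4:ℝ)^(n+1) < v - u := Nat.find_spec hex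
      have hup : v - u ≤ (1/4:ℝ)^n := by
        rcases Nat.eq_zero_or_pos n with h0 | h0
        · rw [h0, pow_zero]
          have := hv.2
          have := hu.1
          linarith
        · have hmin := Nat.find_min hex (show n - 1 < n by omega)
          push_neg at hmin
          have : n - 1 + 1 = n := by omega
          rwa [this] at hmin
      have h1 := hadj2 n u v hu.1 huv hv.2 hup
      have h2 := hPd u n
      have h3 := hPd v n
      have hsq : (1/2:ℝ)^(n+1) ≤ Real.sqrt (v - u) := by
        have hsq2 : ((1/2:ℝ)^(n+1))^2 = (1/4:ℝ)^(n+1) := by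
          rw [← pow_mul, mul_comm (n+1) 2, pow_mul]
          norm_num
        have hs : Real.sqrt ((1/4:ℝ)^(n+1)) = (1/2:ℝ)^(n+1) := by
          rw [← hsq2]
          exact Real.sqrt_sq (by positivity)
        rw [← hs]
        exact Real.sqrt_le_sqrt (le_of_lt hlow)
      have hps : (1/2:ℝ)^(n+1) = (1/2)^n * (1/2) := pow_succ _ _
      calc dist (P v) (P u)
          ≤ dist (P v) (capp n v) + dist (capp n v) (capp n u) + dist (capp n u) (P u) :=
            dist_triangle4 _ _ _ _
        _ ≤ (1/2)^n + (1/2)^n + (1/2)^n := by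
            refine add_le_add (add_le_add h3 h1) ?_
            rw [dist_comm]
            exact h2
        _ ≤ 6 * Real.sqrt (v - u) := by linarith
  have hcont : ContinuousOn P (Set.Icc (0:ℝ) 1) := by
    rw [Metric.continuousOn_iff]
    intro a ha ε hε
    refine ⟨min 1 ((ε/7)^2), by positivity, ?_⟩
    intro x hx hdx
    have hsq : Real.sqrt |x - a| ≤ ε/7 := by
      calc Real.sqrt |x - a| ≤ Real.sqrt ((ε/7)^2) := by
            apply Real.sqrt_le_sqrt
            rw [Real.dist_eq] at hdx
            have := lt_of_lt_of_le hdx (min_le_right _ _)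
            linarith
        _ = ε/7 := Real.sqrt_sq (by positivity)
    have hda : dist (P x) (P a) ≤ 6 * Real.sqrt |x - a| := by
      rcases le_total a x with h | h
      · have := hold a x ha hx h
        rwa [abs_of_nonneg (by linarith)]
      · have := hold x a hx ha h
        rw [dist_comm] at this
        rw [abs_sub_comm, abs_of_nonneg (by linarith)]
        exact this
    have hsqnn : (0:ℝ) ≤ Real.sqrt |x - a| := Real.sqrt_nonneg _
    calc dist (P x) (P a) ≤ 6 * Real.sqrt |x - a| := hda
      _ ≤ 6 * (ε/7) := by linarith
      _ < ε := by linarith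
  refine ⟨P, 6, hcont, ?_, ?_⟩
  · apply Set.Subset.antisymm
    · rintro _ ⟨t, ht, rfl⟩
      have l1 : Filter.Tendsto (fun n => (capp n t).1) Filter.atTop (nhds (P t).1) := by
        have := (continuous_fst.tendsto (P t)).comp (hP t)
        simpa [Function.comp_def] using this
      have l2 : Filter.Tendsto (fun n => (capp n t).2) Filter.atTop (nhds (P t).2) := by
        have := (continuous_snd.tendsto (P t)).comp (hP t)
        simpa [Function.comp_def] using this
      refine ⟨⟨?_, ?_⟩, ⟨?_, ?_⟩⟩
      · exact ge_of_tendsto l1 (Filter.Eventually.of_forall fun n => (capp_mem n t).1)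
      · exact le_of_tendsto l1 (Filter.Eventually.of_forall fun n => (capp_mem n t).2.1)
      · exact ge_of_tendsto l2 (Filter.Eventually.of_forall fun n => (capp_mem n t).2.2.1)
      · exact le_of_tendsto l2 (Filter.Eventually.of_forall fun n => (capp_mem n t).2.2.2)
    · intro z hz
      obtain ⟨⟨hz1a, hz1b⟩, hz2a, hz2b⟩ := hz
      have hcompact : IsCompact (P '' Set.Icc (0:ℝ) 1) :=
        isCompact_Icc.image_of_continuousOn hcont
      rw [← hcompact.isClosed.closure_eq]
      rw [Metric.mem_closure_iff]
      intro ε hε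
      obtain ⟨n, hnε⟩ := exists_pow_lt_of_lt_one (show (0:ℝ) < ε/2 by linarith)
        (show (1/2:ℝ) < 1 by norm_num)
      have h2m : 0 < (2:ℕ)^n := by positivity
      have h4m : 0 < (4:ℕ)^n := by positivity
      have hp2 : (0:ℝ) < 2^n := by positivity
      set i : ℕ := min ⌊(2:ℝ)^n * z.1⌋₊ (2^n - 1) with hi
      set j : ℕ := min ⌊(2:ℝ)^n * z.2⌋₊ (2^n - 1) with hj
      have hibound : ∀ (w : ℝ) (c : ℕ), 0 ≤ w → w ≤ 1 → c = min ⌊(2:ℝ)^n * w⌋₊ (2^n - 1) →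
          (c:ℝ) ≤ 2^n * w ∧ 2^n * w ≤ (c:ℝ) + 1 := by
        intro w c hw0 hw1 hc
        have hfl : (⌊(2:ℝ)^n * w⌋₊ : ℝ) ≤ 2^n * w := Nat.floor_le (by positivity)
        have hfu : 2^n * w < (⌊(2:ℝ)^n * w⌋₊ : ℝ) + 1 := Nat.lt_floor_add_one _
        rcases le_or_gt ⌊(2:ℝ)^n * w⌋₊ (2^n - 1) with h | h
        · rw [hc, min_eq_left h]
          exact ⟨hfl, le_of_lt hfu⟩
        · rw [hc, min_eq_right (le_of_lt h)]
          have hcast : ((2^n - 1 : ℕ) : ℝ) = 2^n - 1 := by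
            push_cast [Nat.cast_sub (Nat.one_le_iff_ne_zero.2 (Nat.pos_iff_ne_zero.1 h2m))]
            ring
          constructor
          · have : ((2^n - 1 : ℕ) : ℝ) + 1 ≤ (⌊(2:ℝ)^n * w⌋₊ : ℝ) := by
              exact_mod_cast h
            linarith
          · rw [hcast]
            nlinarith
      have hiz := hibound z.1 i hz1a hz1b hi
      have hjz := hibound z.2 j hz2a hz2b hj
      have hilt : (i:ℤ) < 2^n := by
        have h1 : i < 2^n := by
          have h2 : i ≤ 2^n - 1 := by rw [hi]; exact min_le_right _ _
          omega
        exact_mod_cast h1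
      have hjlt : (j:ℤ) < 2^n := by
        have h1 : j < 2^n := by
          have h2 : j ≤ 2^n - 1 := by rw [hj]; exact min_le_right _ _
          omega
        exact_mod_cast h1
      obtain ⟨k, hk, hkv⟩ := hil_cover n false false (i:ℤ) (j:ℤ)
        (by positivity) (by exact_mod_cast hilt) (by positivity) (by exact_mod_cast hjlt)
      set t : ℝ := (k:ℝ)/4^n with htdef
      have hp4 : (0:ℝ) < 4^n := by positivity
      have ht : t ∈ Set.Icc (0:ℝ) 1 := by
        constructor
        · positivity
        · rw [htdef, div_le_one hp4]
          have : (k:ℝ) ≤ ((4^n - 1 : ℕ):ℝ) := by exact_mod_cast Nat.le_sub_one_of_lt hk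
          have hcast : ((4^n - 1 : ℕ) : ℝ) ≤ 4^n - 1 := by
            push_cast [Nat.cast_sub (Nat.one_le_iff_ne_zero.2 (Nat.pos_iff_ne_zero.1 h4m))]
            norm_num
          linarith
      have hidx : idx n t = k := by
        unfold idx
        have he : (4:ℝ)^n * t = (k:ℝ) := by
          rw [htdef]
          field_simp
        rw [he, Nat.floor_natCast]
        have : k ≤ 4^n - 1 := Nat.le_sub_one_of_lt hk
        omega
      have hcapp : capp n t = ((i:ℝ)/2^n, (j:ℝ)/2^n) := by
        unfold capp
        rw [hidx, hkv]
        push_cast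
        rfl
      refine ⟨P t, Set.mem_image_of_mem P ht, ?_⟩
      have hdz : dist z (capp n t) ≤ (1/2:ℝ)^n := by
        rw [hcapp, Prod.dist_eq]
        have hcc : ∀ (w : ℝ) (c : ℕ), (c:ℝ) ≤ 2^n * w → 2^n * w ≤ (c:ℝ) + 1 →
            dist w ((c:ℝ)/2^n) ≤ (1/2:ℝ)^n := by
          intro w c hA hB
          rw [Real.dist_eq]
          have e1 : w - (c:ℝ)/2^n = (2^n * w - c)/2^n := by
            field_simp
          have hpow : ((1:ℝ)/2)^n = 1/2^n := by rw [div_pow, one_pow]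
          rw [e1, abs_div, abs_of_pos hp2, hpow]
          gcongr
          rw [abs_le]
          constructor <;> linarith
        exact max_le (hcc z.1 i hiz.1 hiz.2) (hcc z.2 j hjz.1 hjz.2)
      calc dist z (P t) ≤ dist z (capp n t) + dist (capp n t) (P t) := dist_triangle _ _ _
        _ ≤ (1/2)^n + (1/2)^n := by
            refine add_le_add hdz ?_
            rw [dist_comm]
            exact hPd t n
        _ < ε := by linarith
  · intro s hs t ht
    have habs : ∀ u v : ℝ, u ≤ v → u ∈ Set.Icc (0:ℝ) 1 → v ∈ Set.Icc (0:ℝ) 1 →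
        ‖P v - P u‖ ≤ 6 * |v - u| ^ ((1:ℝ)/2) := by
      intro u v huv hu hv
      have := hold u v hu hv huv
      rw [dist_eq_norm] at this
      calc ‖P v - P u‖ ≤ 6 * Real.sqrt (v - u) := this
        _ = 6 * |v - u| ^ ((1:ℝ)/2) := by
            rw [abs_of_nonneg (by linarith), Real.sqrt_eq_rpow]
    rcases le_total s t with h | h
    · exact habs s t h hs ht
    · have := habs t s h ht hs
      rwa [norm_sub_rev, abs_sub_comm] at this
end

section
/- If f : [0,1] → ℝ^n is continuous, then the image f([0,1]) is weakly locally connected: for all a ∈ f([0,1]) and η > 0, there exists 0 < ε < η such that every x ∈ f([0,1]) with ‖x − a‖ < ε lies in the same connected component of f([0,1]) ∩ B_η(a) as a. -/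
/-- The continuous image of `[0,1]` in `ℝⁿ` is weakly locally connected: for
every point `a` of the image and every `η > 0` there is `0 < ε < η` such that
every point of the image within distance `ε` of `a` lies in the same connected
component of the intersection of the image with `B_η(a)` as `a`. -/
theorem image_interval_weakly_locally_connected (n : ℕ)
    (f : ℝ → EuclideanSpace ℝ (Fin n)) (hf : ContinuousOn f (Set.Icc (0 : ℝ) 1)) :
    ∀ a ∈ f '' Set.Icc (0 : ℝ) 1, ∀ η > (0 : ℝ), ∃ ε : ℝ, 0 < ε ∧ ε < η ∧
      ∀ x ∈ f '' Set.Icc (0 : ℝ) 1, ‖x - a‖ < ε →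
        x ∈ connectedComponentIn ((f '' Set.Icc (0 : ℝ) 1) ∩ Metric.ball a η) a := by
  intro a ha η hη
  by_contra h
  push_neg at h
  have key : ∀ k : ℕ, ∃ t ∈ Set.Icc (0:ℝ) 1, ‖f t - a‖ < min η (1/(k+1)) / 2 ∧
      f t ∉ connectedComponentIn ((f '' Set.Icc (0 : ℝ) 1) ∩ Metric.ball a η) a := by
    intro k
    have hk1 : (0:ℝ) < 1/(k+1) := by positivity
    have hpos : 0 < min η (1/(k+1))/2 := by positivity
    have hlt : min η (1/(k+1))/2 < η := by
      have : min η (1/(k+1)) ≤ η := min_le_left _ _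
      linarith
    obtain ⟨x, hx, hxn, hxc⟩ := h _ hpos hlt
    obtain ⟨t, ht, rfl⟩ := hx
    exact ⟨t, ht, hxn, hxc⟩
  choose t ht hnorm hcomp using key
  obtain ⟨l, hl, φ, hφ, htend⟩ := isCompact_Icc.tendsto_subseq ht
  have hfl : Filter.Tendsto (fun k => f (t (φ k))) Filter.atTop (nhds (f l)) := by
    refine ((hf l hl).tendsto).comp ?_
    rw [tendsto_nhdsWithin_iff]
    exact ⟨htend, Filter.Eventually.of_forall fun k => ht _⟩
  have hfa : Filter.Tendsto (fun k => f (t (φ k))) Filter.atTop (nhds a) := by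
    rw [tendsto_iff_norm_sub_tendsto_zero]
    refine squeeze_zero (fun k => norm_nonneg _) (fun k => (hnorm (φ k)).le.trans ?_)
      tendsto_one_div_add_atTop_nhds_zero_nat
    have h1 : (1:ℝ)/(φ k+1) ≤ 1/(k+1) := by
      apply one_div_le_one_div_of_le (by positivity)
      have : (k:ℝ) ≤ φ k := by exact_mod_cast hφ.le_apply (x := k)
      linarith
    have h2 : min η (1/(φ k+1)) ≤ 1/(φ k+1) := min_le_right _ _
    have h3 : (0:ℝ) < 1/(k+1) := by positivity
    linarith
  have hla : f l = a := tendsto_nhds_unique hfl hfa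
  have hc := hf l hl
  rw [Metric.continuousWithinAt_iff] at hc
  obtain ⟨δ, hδ, hδ'⟩ := hc η hη
  set S := Set.Icc (0:ℝ) 1 ∩ Metric.ball l δ with hS
  have hSpre : IsPreconnected (f '' S) := by
    refine IsPreconnected.image ?_ f (hf.mono Set.inter_subset_left)
    have : Set.OrdConnected S := by
      rw [hS, Real.ball_eq_Ioo]
      exact Set.ordConnected_Icc.inter Set.ordConnected_Ioo
    exact this.isPreconnected
  have hSsub : f '' S ⊆ (f '' Set.Icc (0:ℝ) 1) ∩ Metric.ball a η := by
    rintro _ ⟨s, ⟨hs1, hs2⟩, rfl⟩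
    refine ⟨Set.mem_image_of_mem f hs1, ?_⟩
    rw [Metric.mem_ball]
    have := hδ' hs1 (Metric.mem_ball.mp hs2)
    rwa [hla] at this
  have haS : a ∈ f '' S := ⟨l, ⟨hl, Metric.mem_ball_self hδ⟩, hla⟩
  have hsubcomp : f '' S ⊆ connectedComponentIn ((f '' Set.Icc (0:ℝ) 1) ∩ Metric.ball a η) a :=
    hSpre.subset_connectedComponentIn haS hSsub
  obtain ⟨k, hk⟩ := (htend.eventually_mem (Metric.ball_mem_nhds l hδ)).exists
  exact hcomp (φ k) (hsubcomp ⟨t (φ k), ⟨ht _, hk⟩, rfl⟩)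
end

section
/- A nonempty subset A ⊆ ℝ^n is the image of a continuous map f : [0,1] → ℝ^n if and only if A is compact, connected, and locally connected (Hahn–Mazurkiewicz theorem). -/
open Set Metric Topology List

set_option linter.unusedSectionVars false

namespace HM

variable {X : Type*} [MetricSpace X]

lemma exists_small_connected_nhd [LocallyConnectedSpace X] (x : X) {ε : ℝ} (hε : 0 < ε) :
    ∃ V : Set X, IsOpen V ∧ IsConnected V ∧ x ∈ V ∧ Metric.diam V ≤ ε := by
  obtain ⟨V, ⟨hVo, hxV, hVc⟩, hVsub⟩ :=
    (LocallyConnectedSpace.open_connected_basis x).mem_iff.mp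
      (Metric.ball_mem_nhds x (show (0:ℝ) < ε/2 by linarith))
  refine ⟨V, hVo, hVc, hxV, ?_⟩
  calc Metric.diam V ≤ Metric.diam (Metric.ball x (ε/2)) :=
        Metric.diam_mono hVsub Metric.isBounded_ball
    _ ≤ 2 * (ε/2) := Metric.diam_ball (by linarith)
    _ = ε := by ring

lemma exists_finite_cover [CompactSpace X] [LocallyConnectedSpace X] {ε : ℝ} (hε : 0 < ε) :
    ∃ F : List (Set X), (∀ V ∈ F, IsOpen V ∧ IsConnected V ∧ Metric.diam V ≤ ε) ∧
      ∀ x : X, ∃ V ∈ F, x ∈ V := by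
  choose V hVo hVc hxV hVd using fun x : X => exists_small_connected_nhd x hε
  obtain ⟨t, ht⟩ := IsCompact.elim_finite_subcover isCompact_univ V hVo
    (fun x _ => mem_iUnion.mpr ⟨x, hxV x⟩)
  refine ⟨t.toList.map V, ?_, ?_⟩
  · intro W hW
    simp only [List.mem_map, Finset.mem_toList] at hW
    obtain ⟨x, -, rfl⟩ := hW
    exact ⟨hVo x, hVc x, hVd x⟩
  · intro x
    obtain ⟨y, hy⟩ := mem_iUnion₂.mp (ht (mem_univ x))
    exact ⟨V y, List.mem_map.mpr ⟨y, Finset.mem_toList.mpr hy.1, rfl⟩, hy.2⟩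

/-- A walk in the "intersection graph" of the family `F`, from `V` to `W`. -/
def IsWalk (F : List (Set X)) (V W : Set X) (l : List (Set X)) : Prop :=
  (∀ Z ∈ l, Z ∈ F) ∧ l.Chain' (fun A B => (A ∩ B).Nonempty) ∧
    l.head? = some V ∧ l.getLast? = some W

lemma IsWalk.ne_nil {F : List (Set X)} {V W : Set X} {l : List (Set X)}
    (h : IsWalk F V W l) : l ≠ [] := by
  rintro rfl
  exact absurd h.2.2.1 (by simp)

omit [MetricSpace X] in
lemma isWalk_singleton {F : List (Set X)} {V : Set X} (hV : V ∈ F) :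
    IsWalk F V V [V] := by
  exact ⟨by simpa using hV, List.isChain_singleton V, rfl, rfl⟩

lemma IsWalk.trans {F : List (Set X)} {V Z W : Set X} {l₁ l₂ : List (Set X)}
    (h₁ : IsWalk F V Z l₁) (h₂ : IsWalk F Z W l₂) :
    IsWalk F V W (l₁ ++ l₂.tail) ∧ ∀ A ∈ l₂, A ∈ l₁ ++ l₂.tail := by
  obtain ⟨hm₁, hc₁, hh₁, hl₁⟩ := h₁
  obtain ⟨hm₂, hc₂, hh₂, hl₂⟩ := h₂
  obtain ⟨t, rfl⟩ : ∃ t, l₂ = Z :: t := by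
    cases l₂ with
    | nil => simp at hh₂
    | cons a t =>
      simp only [List.head?_cons, Option.some.injEq] at hh₂
      exact ⟨t, by rw [hh₂]⟩
  have hZl₁ : l₁.getLast? = some Z := hl₁
  constructor
  · refine ⟨?_, ?_, ?_, ?_⟩
    · intro A hA
      rcases List.mem_append.mp hA with h | h
      · exact hm₁ A h
      · exact hm₂ A (List.mem_cons_of_mem _ h)
    · refine List.isChain_append.mpr ⟨hc₁, (List.isChain_cons.mp hc₂).2, ?_⟩
      intro x hx y hy
      have hxZ : Z = x := by rw [hZl₁] at hx; simpa using hx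
      subst hxZ
      exact (List.isChain_cons.mp hc₂).1 y hy
    · cases l₁ with
      | nil => simp at hh₁
      | cons a s => simpa using hh₁
    · cases ht : t with
      | nil =>
        subst ht
        simp only [List.tail_cons, List.append_nil]
        rw [hZl₁]
        simpa using hl₂
      | cons b s =>
        subst ht
        rw [List.tail_cons, List.getLast?_append_of_ne_nil _ (by simp)]
        simpa using hl₂
  · intro A hA
    rcases List.mem_cons.mp hA with rfl | h
    · exact List.mem_append.mpr (Or.inl (List.mem_of_mem_getLast? hZl₁))
    · exact List.mem_append.mpr (Or.inr h)


lemma exists_walk {F : List (Set X)} {U : Set X}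
    (hF : ∀ V ∈ F, IsOpen V ∧ IsConnected V ∧ (V ∩ U).Nonempty)
    (hU : IsPreconnected U) (hUne : U.Nonempty) (hcov : ∀ x ∈ U, ∃ V ∈ F, x ∈ V)
    {V W : Set X} (hV : V ∈ F) (hW : W ∈ F) : ∃ l, IsWalk F V W l := by
  by_contra hcon
  push_neg at hcon
  -- the union of all members of `F` is preconnected
  set T : Set X := ⋃₀ {Z | Z ∈ F} with hT
  have hUT : U ⊆ T := by
    intro x hx
    obtain ⟨Z, hZF, hxZ⟩ := hcov x hx
    exact ⟨Z, hZF, hxZ⟩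
  have hTpre : IsPreconnected T := by
    obtain ⟨x₀, hx₀⟩ := hUne
    have h1 : IsPreconnected (⋃₀ ((fun Z => U ∪ Z) '' {Z | Z ∈ F})) := by
      refine isPreconnected_sUnion x₀ _ ?_ ?_
      · rintro s ⟨Z, hZ, rfl⟩; exact Or.inl hx₀
      · rintro s ⟨Z, hZ, rfl⟩
        exact hU.union' (by
          obtain ⟨y, hy1, hy2⟩ := (hF Z hZ).2.2
          exact ⟨y, hy2, hy1⟩) ((hF Z hZ).2.1).isPreconnected
    have : ⋃₀ ((fun Z => U ∪ Z) '' {Z | Z ∈ F}) = T := by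
      apply Set.Subset.antisymm
      · rintro x ⟨s, ⟨Z, hZ, rfl⟩, hx⟩
        rcases hx with hx | hx
        · exact hUT hx
        · exact ⟨Z, hZ, hx⟩
      · rintro x ⟨Z, hZ, hx⟩
        exact ⟨U ∪ Z, ⟨Z, hZ, rfl⟩, Or.inr hx⟩
    rwa [this] at h1
  -- split into reachable / unreachable parts
  set A : Set X := ⋃₀ {Z | Z ∈ F ∧ ∃ l, IsWalk F V Z l} with hA
  set B : Set X := ⋃₀ {Z | Z ∈ F ∧ ¬ ∃ l, IsWalk F V Z l} with hB
  have hAo : IsOpen A := isOpen_sUnion (fun Z hZ => (hF Z hZ.1).1)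
  have hBo : IsOpen B := isOpen_sUnion (fun Z hZ => (hF Z hZ.1).1)
  have hTAB : T ⊆ A ∪ B := by
    rintro x ⟨Z, hZ, hx⟩
    by_cases h : ∃ l, IsWalk F V Z l
    · exact Or.inl ⟨Z, ⟨hZ, h⟩, hx⟩
    · exact Or.inr ⟨Z, ⟨hZ, h⟩, hx⟩
  have hTA : (T ∩ A).Nonempty := by
    obtain ⟨v₀, hv₀⟩ := (hF V hV).2.1.nonempty
    exact ⟨v₀, ⟨V, hV, hv₀⟩, ⟨V, ⟨hV, ⟨[V], isWalk_singleton hV⟩⟩, hv₀⟩⟩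
  have hTB : (T ∩ B).Nonempty := by
    obtain ⟨w₀, hw₀⟩ := (hF W hW).2.1.nonempty
    exact ⟨w₀, ⟨W, hW, hw₀⟩, ⟨W, ⟨hW, fun ⟨l, hl⟩ => hcon l hl⟩, hw₀⟩⟩
  obtain ⟨x, -, hxA, hxB⟩ := hTpre A B hAo hBo hTAB hTA hTB
  obtain ⟨Z₁, ⟨hZ₁F, l, hl⟩, hxZ₁⟩ := hxA
  obtain ⟨Z₂, ⟨hZ₂F, hno⟩, hxZ₂⟩ := hxB
  refine hno ?_
  have hw2 : IsWalk F Z₁ Z₂ [Z₁, Z₂] := by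
    refine ⟨?_, List.isChain_pair.mpr ⟨x, hxZ₁, hxZ₂⟩, rfl, rfl⟩
    intro z hz
    rcases List.mem_cons.mp hz with rfl | hz
    · exact hZ₁F
    · rcases List.mem_singleton.mp hz with rfl
      exact hZ₂F
  exact ⟨_, (hl.trans hw2).1⟩

lemma exists_walk_through {F : List (Set X)} {U : Set X}
    (hF : ∀ V ∈ F, IsOpen V ∧ IsConnected V ∧ (V ∩ U).Nonempty)
    (hU : IsPreconnected U) (hUne : U.Nonempty) (hcov : ∀ x ∈ U, ∃ V ∈ F, x ∈ V)
    {V W : Set X} (hV : V ∈ F) (hW : W ∈ F) (l : List (Set X)) (hl : ∀ Z ∈ l, Z ∈ F) :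
    ∃ w, IsWalk F V W w ∧ ∀ Z ∈ l, Z ∈ w := by
  induction l generalizing V with
  | nil =>
    obtain ⟨w, hw⟩ := exists_walk hF hU hUne hcov hV hW
    exact ⟨w, hw, by simp⟩
  | cons Z₀ t ih =>
    have hZ₀ : Z₀ ∈ F := hl Z₀ (by simp)
    obtain ⟨w₁, hw₁⟩ := exists_walk hF hU hUne hcov hV hZ₀
    obtain ⟨w₂, hw₂, hw₂mem⟩ := ih hZ₀ (fun Z hZ => hl Z (List.mem_cons_of_mem _ hZ))
    obtain ⟨hwalk, hmem⟩ := hw₁.trans hw₂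
    refine ⟨w₁ ++ w₂.tail, hwalk, ?_⟩
    intro Z hZ
    rcases List.mem_cons.mp hZ with rfl | hZt
    · exact List.mem_append.mpr (Or.inl (List.mem_of_mem_getLast? hw₁.2.2.2))
    · exact hmem Z (hw₂mem Z hZt)

/-- Main combinatorial lemma: a connected open set `U` admits a "chain cover":
a finite walk of small connected open sets covering `U`, starting at a set
containing `a` and ending at a set containing `b`. -/
theorem chainCover [CompactSpace X] [LocallyConnectedSpace X] {U : Set X} (hUo : IsOpen U)
    (hUc : IsPreconnected U) {a b : X} (ha : a ∈ U) (hb : b ∈ U) {ε : ℝ} (hε : 0 < ε) :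
    ∃ L : List (Set X), L ≠ [] ∧
      (∀ V ∈ L, IsOpen V ∧ IsConnected V ∧ Metric.diam V ≤ ε ∧ (V ∩ U).Nonempty) ∧
      L.Chain' (fun A B => (A ∩ B).Nonempty) ∧
      (∀ V ∈ L.head?, a ∈ V) ∧ (∀ V ∈ L.getLast?, b ∈ V) ∧
      ∀ x ∈ U, ∃ V ∈ L, x ∈ V := by
  classical
  obtain ⟨F₀, hF₀, hcov₀⟩ := exists_finite_cover (X := X) hε
  set F : List (Set X) := F₀.filter (fun V => decide ((V ∩ U).Nonempty)) with hF
  have hmemF : ∀ V, V ∈ F ↔ V ∈ F₀ ∧ (V ∩ U).Nonempty := by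
    intro V; simp [hF, List.mem_filter]
  have hFprop : ∀ V ∈ F, IsOpen V ∧ IsConnected V ∧ (V ∩ U).Nonempty := by
    intro V hV
    obtain ⟨h1, h2⟩ := (hmemF V).mp hV
    exact ⟨(hF₀ V h1).1, (hF₀ V h1).2.1, h2⟩
  have hcov : ∀ x ∈ U, ∃ V ∈ F, x ∈ V := by
    intro x hx
    obtain ⟨V, hVF₀, hxV⟩ := hcov₀ x
    exact ⟨V, (hmemF V).mpr ⟨hVF₀, ⟨x, hxV, hx⟩⟩, hxV⟩
  obtain ⟨Va, hVa, haVa⟩ := hcov a ha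
  obtain ⟨Vb, hVb, hbVb⟩ := hcov b hb
  obtain ⟨w, hw, hwall⟩ := exists_walk_through hFprop hUc ⟨a, ha⟩ hcov hVa hVb F (fun Z hZ => hZ)
  refine ⟨w, hw.ne_nil, ?_, hw.2.1, ?_, ?_, ?_⟩
  · intro V hV
    have hVF := hw.1 V hV
    obtain ⟨h1, h2, h3⟩ := hFprop V hVF
    exact ⟨h1, h2, (hF₀ V ((hmemF V).mp hVF).1).2.2, h3⟩
  · intro V hV
    rw [hw.2.2.1] at hV
    rcases Option.mem_some_iff.mp hV with rfl
    exact haVa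
  · intro V hV
    rw [hw.2.2.2] at hV
    rcases Option.mem_some_iff.mp hV with rfl
    exact hbVb
  · intro x hx
    obtain ⟨V, hVF, hxV⟩ := hcov x hx
    exact ⟨V, hwall V hVF, hxV⟩



variable {X : Type*} [MetricSpace X]

/-- Indexing into a list, capped at the last element. -/
def capGet (L : List (Set X)) (j : ℕ) : Set X := L.getD (min j (L.length - 1)) ∅

omit [MetricSpace X] in
lemma capGet_eq_get (L : List (Set X)) (hL : L ≠ []) (j : ℕ) :
    capGet L j = L.get ⟨min j (L.length - 1), by
      have := List.length_pos_iff.mpr hL; omega⟩ := by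
  rw [capGet, List.getD_eq_getElem]
  · simp
  · have := List.length_pos_iff.mpr hL; omega

omit [MetricSpace X] in
lemma capGet_mem (L : List (Set X)) (hL : L ≠ []) (j : ℕ) : capGet L j ∈ L := by
  rw [capGet_eq_get L hL]; exact List.get_mem L _

omit [MetricSpace X] in
lemma capGet_of_lt {L : List (Set X)} {j : ℕ} (h : j < L.length) :
    capGet L j = L.get ⟨j, h⟩ := by
  have hL : L ≠ [] := List.length_pos_iff.mp (by omega)
  rw [capGet_eq_get L hL]
  congr 1
  simp only [Fin.mk.injEq]
  omega

omit [MetricSpace X] in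
lemma capGet_eq_getLast {L : List (Set X)} (hL : L ≠ []) {j : ℕ} (h : L.length ≤ j + 1) :
    capGet L j = L.getLast hL := by
  rw [capGet_eq_get L hL, List.getLast_eq_getElem, List.get_eq_getElem]
  congr 1
  dsimp only
  have := List.length_pos_iff.mpr hL
  omega

omit [MetricSpace X] in
lemma capGet_zero {L : List (Set X)} (hL : L ≠ []) :
    capGet L 0 = L.head hL := by
  rw [capGet_eq_get L hL, ← List.get_mk_zero (List.length_pos_iff.mpr hL)]
  congr 1

lemma capGet_link {L : List (Set X)} (hL : L ≠ [])
    (hch : L.Chain' (fun A B => (A ∩ B).Nonempty))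
    (hne : ∀ V ∈ L, V.Nonempty) (j : ℕ) :
    (capGet L j ∩ capGet L (j + 1)).Nonempty := by
  have hpos := List.length_pos_iff.mpr hL
  rcases Nat.lt_or_ge (j + 1) L.length with h | h
  · -- consecutive entries
    have h1 : min j (L.length - 1) = j := by omega
    have h2 : min (j+1) (L.length - 1) = j + 1 := by omega
    rw [capGet_eq_get L hL, capGet_eq_get L hL]
    simp only [h1, h2]
    exact List.isChain_iff_getElem.mp hch j (by omega)
  · -- both capped to the same entry (or j = length - 1 = j+1 cap)
    rcases Nat.lt_or_ge j L.length with h' | h'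
    · by_cases hj : j + 1 = L.length
      · have h1 : min j (L.length - 1) = j := by omega
        have h2 : min (j+1) (L.length - 1) = j := by omega
        rw [capGet_eq_get L hL, capGet_eq_get L hL]
        simp only [h1, h2, Set.inter_self]
        exact hne _ (List.get_mem L _)
      · have : min j (L.length - 1) = min (j+1) (L.length - 1) := by omega
        rw [capGet, capGet, this, Set.inter_self]
        exact hne _ (capGet_mem L hL _)
    · have : min j (L.length - 1) = min (j+1) (L.length - 1) := by omega
      rw [capGet, capGet, this, Set.inter_self]
      exact hne _ (capGet_mem L hL _)

/-- The data of one stage of the construction: a cyclic-free "chain" of `N`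
connected open sets of diameter at most `c`, consecutive ones intersecting,
whose first `N` members cover `X`.  (The function `U` is defined on all of `ℕ`
for convenience.) -/
structure PData (X : Type*) [MetricSpace X] where
  N : ℕ
  c : ℝ
  U : ℕ → Set X
  hN : 0 < N
  opn : ∀ i, IsOpen (U i)
  conn : ∀ i, IsConnected (U i)
  small : ∀ i, Metric.diam (U i) ≤ c
  link : ∀ i, (U i ∩ U (i + 1)).Nonempty
  covers : ∀ p : X, ∃ i < N, p ∈ U i


theorem exists_base [CompactSpace X] [ConnectedSpace X] [LocallyConnectedSpace X] [Nonempty X] :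
    ∃ P : PData X, P.c = 1 := by
  obtain ⟨L, hLne, hLprop, hLchain, -, -, hLcov⟩ :=
    chainCover (X := X) isOpen_univ isPreconnected_univ (mem_univ (Classical.arbitrary X))
      (mem_univ (Classical.arbitrary X)) one_pos
  refine ⟨⟨L.length, 1, fun i => capGet L i, List.length_pos_iff.mpr hLne, ?_, ?_, ?_, ?_, ?_⟩, rfl⟩
  · exact fun i => (hLprop _ (capGet_mem L hLne i)).1
  · exact fun i => (hLprop _ (capGet_mem L hLne i)).2.1
  · exact fun i => (hLprop _ (capGet_mem L hLne i)).2.2.1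
  · exact capGet_link hLne hLchain (fun V hV => (hLprop V hV).2.1.nonempty)
  · intro p
    obtain ⟨V, hVL, hpV⟩ := hLcov p (mem_univ p)
    obtain ⟨j, hj, rfl⟩ := List.mem_iff_get.mp hVL
    refine ⟨j, j.2, ?_⟩
    show p ∈ capGet L j
    rw [capGet_of_lt j.2]
    exact hpV

theorem exists_refine [CompactSpace X] [LocallyConnectedSpace X] (P : PData X) {ε : ℝ}
    (hε : 0 < ε) :
    ∃ (Q : PData X) (M : ℕ), 0 < M ∧ Q.c = ε ∧ Q.N = P.N * M ∧
      ∀ m < Q.N, (Q.U m ∩ P.U (m / M)).Nonempty := by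
  classical
  -- choose connecting points between consecutive sets
  set q : ℕ → X := fun i => Nat.casesOn i (P.conn 0).nonempty.some (fun j => (P.link j).some)
    with hq
  have hq1 : ∀ i, q (i + 1) ∈ P.U i ∩ P.U (i + 1) := fun i => (P.link i).some_mem
  have hqU : ∀ i, q i ∈ P.U i := by
    intro i
    cases i with
    | zero => exact (P.conn 0).nonempty.some_mem
    | succ j => exact (hq1 j).2
  -- chain covers of each set
  have key : ∀ i : ℕ, ∃ L : List (Set X), L ≠ [] ∧
      (∀ V ∈ L, IsOpen V ∧ IsConnected V ∧ Metric.diam V ≤ ε ∧ (V ∩ P.U i).Nonempty) ∧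
      L.Chain' (fun A B => (A ∩ B).Nonempty) ∧
      (∀ V ∈ L.head?, q i ∈ V) ∧ (∀ V ∈ L.getLast?, q (i+1) ∈ V) ∧
      ∀ x ∈ P.U i, ∃ V ∈ L, x ∈ V :=
    fun i => chainCover (P.opn i) (P.conn i).isPreconnected (hqU i) (hq1 i).1 hε
  choose L hLne hLprop hLchain hLhead hLlast hLcov using key
  obtain ⟨M, hM⟩ : ∃ M, M = (Finset.range P.N).sup (fun i => (L i).length) := ⟨_, rfl⟩
  have hMpos : 0 < M := by
    have h0 : (L 0).length ≤ M := hM ▸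
      Finset.le_sup (f := fun i => (L i).length) (Finset.mem_range.mpr P.hN)
    have := List.length_pos_iff.mpr (hLne 0)
    omega
  have hlen : ∀ i < P.N, (L i).length ≤ M :=
    fun i hi => hM ▸ Finset.le_sup (f := fun i => (L i).length) (Finset.mem_range.mpr hi)
  obtain ⟨K, hK⟩ : ∃ K, K = P.N * M := ⟨_, rfl⟩
  have hKpos : 0 < K := hK ▸ Nat.mul_pos P.hN hMpos
  set Qu : ℕ → Set X := fun m => capGet (L ((min m (K-1)) / M)) ((min m (K-1)) % M) with hQu
  have hQmem : ∀ m, ∃ i, Qu m ∈ L i := fun m => ⟨_, capGet_mem _ (hLne _) _⟩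
  have hQopn : ∀ m, IsOpen (Qu m) := by
    intro m; obtain ⟨i, hi⟩ := hQmem m; exact (hLprop i _ hi).1
  have hQconn : ∀ m, IsConnected (Qu m) := by
    intro m; obtain ⟨i, hi⟩ := hQmem m; exact (hLprop i _ hi).2.1
  have hQsmall : ∀ m, Metric.diam (Qu m) ≤ ε := by
    intro m; obtain ⟨i, hi⟩ := hQmem m; exact (hLprop i _ hi).2.2.1
  have hQlink : ∀ m, (Qu m ∩ Qu (m+1)).Nonempty := by
    intro m
    rcases Nat.lt_or_ge m (K - 1) with hm | hm
    · have κ1 : min m (K-1) = m := by omega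
      have κ2 : min (m+1) (K-1) = m + 1 := by omega
      simp only [hQu, κ1, κ2]
      have hmK : m < P.N * M := by omega
      have hiN : m / M < P.N := Nat.div_lt_of_lt_mul (Nat.mul_comm P.N M ▸ hmK)
      by_cases hj : m % M = M - 1
      · -- boundary between blocks
        have hm1 : m + 1 = M * (m / M + 1) := by
          rw [Nat.mul_succ]
          have := Nat.div_add_mod m M
          omega
        have hdiv : (m+1) / M = m / M + 1 := by rw [hm1, Nat.mul_div_cancel_left _ hMpos]
        have hmod : (m+1) % M = 0 := by rw [hm1, Nat.mul_mod_right]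
        rw [hdiv, hmod]
        set i := m / M
        have h1 : capGet (L i) (m % M) = (L i).getLast (hLne i) := by
          apply capGet_eq_getLast
          have := hlen i hiN
          have := List.length_pos_iff.mpr (hLne i)
          omega
        have h2 : capGet (L (i+1)) 0 = (L (i+1)).head (hLne (i+1)) := capGet_zero _
        rw [h1, h2]
        refine ⟨q (i+1), ?_, ?_⟩
        · exact hLlast i _ (List.getLast?_eq_getLast (hLne i) ▸ rfl)
        · exact hLhead (i+1) _ (List.head?_eq_head (hLne (i+1)) ▸ rfl)
      · -- inside a block
        have hmod' : m % M < M - 1 := by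
          have := Nat.mod_lt m hMpos
          omega
        have hm1 : m + 1 = M * (m / M) + (m % M + 1) := by
          have := Nat.div_add_mod m M
          omega
        have hdiv : (m+1) / M = m / M := by
          rw [hm1, Nat.mul_add_div hMpos]
          have h0 : (m % M + 1) / M = 0 := Nat.div_eq_of_lt (by omega)
          omega
        have hmod : (m+1) % M = m % M + 1 := by
          rw [hm1, Nat.mul_add_mod]
          exact Nat.mod_eq_of_lt (by omega)
        rw [hdiv, hmod]
        exact capGet_link (hLne _) (hLchain _)
          (fun V hV => (hLprop _ V hV).2.1.nonempty) _
    · have : min m (K-1) = min (m+1) (K-1) := by omega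
      simp only [hQu, this, Set.inter_self]
      exact (hQconn (m+1)).nonempty
  refine ⟨⟨K, ε, Qu, hKpos, hQopn, hQconn, hQsmall, hQlink, ?_⟩, M, hMpos, rfl, hK, ?_⟩
  · -- covering
    intro p
    obtain ⟨i, hiN, hpU⟩ := P.covers p
    obtain ⟨V, hVL, hpV⟩ := hLcov i p hpU
    obtain ⟨j, hjlen, rfl⟩ := List.mem_iff_get.mp hVL
    refine ⟨M * i + j, ?_, ?_⟩
    · have hjM : (j : ℕ) < M := lt_of_lt_of_le j.2 (hlen i hiN)
      calc M * i + (j:ℕ) < M * i + M := by omega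
        _ = M * (i + 1) := by ring
        _ ≤ M * P.N := Nat.mul_le_mul_left _ (by omega)
        _ = K := by rw [hK, Nat.mul_comm]

    · have hjM : (j : ℕ) < M := lt_of_lt_of_le j.2 (hlen i hiN)
      have hlt : M * i + (j:ℕ) < K := by
        calc M * i + (j:ℕ) < M * i + M := by omega
          _ = M * (i + 1) := by ring
          _ ≤ M * P.N := Nat.mul_le_mul_left _ (by omega)
          _ = K := by rw [hK, Nat.mul_comm]
      have κ : min (M * i + (j:ℕ)) (K-1) = M * i + (j:ℕ) := by omega
      have hdiv : (M * i + (j:ℕ)) / M = i := by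
        rw [Nat.mul_add_div hMpos, Nat.div_eq_of_lt hjM]; omega
      have hmod : (M * i + (j:ℕ)) % M = j := by
        rw [Nat.mul_add_mod, Nat.mod_eq_of_lt hjM]
      simp only [hQu, κ, hdiv, hmod]
      rw [capGet_of_lt j.2]
      simpa using hpV
  · -- the refinement relation
    intro m hm
    have κ : min m (K-1) = m := by
      have : m < K := hm
      omega
    simp only [hQu, κ]
    have hmem := capGet_mem (L (m / M)) (hLne _) (m % M)
    exact (hLprop _ _ hmem).2.2.2


omit [MetricSpace X] in
lemma nat_min_div {M N : ℕ} (a : ℕ) (hM : 0 < M) (hN : 0 < N) :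
    (min a (N * M - 1)) / M = min (a / M) (N - 1) := by
  rcases Nat.lt_or_ge (a / M) N with h | h
  · have ha : a < N * M := (Nat.div_lt_iff_lt_mul hM).mp h
    have h1 : min a (N * M - 1) = a := by omega
    rw [h1]
    omega
  · have ha : N * M ≤ a := (Nat.le_div_iff_mul_le hM).mp h
    have h1 : min a (N * M - 1) = N * M - 1 := by omega
    rw [h1]
    obtain ⟨N', rfl⟩ : ∃ N', N = N' + 1 := ⟨N - 1, by omega⟩
    have h2 : (N' + 1) * M - 1 = M * N' + (M - 1) := by
      rw [Nat.succ_mul, Nat.mul_comm M N']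
      omega
    rw [h2, Nat.mul_add_div hM, Nat.div_eq_of_lt (by omega)]
    omega

variable [CompactSpace X] [ConnectedSpace X] [LocallyConnectedSpace X] [Nonempty X]

/-- Every nonempty compact, connected, locally connected metric space is a
continuous image of the unit interval. -/
theorem exists_cont_surj :
    ∃ f : ℝ → X, Continuous f ∧ f '' Set.Icc (0:ℝ) 1 = Set.univ := by
  obtain ⟨P₀, hP₀c⟩ := exists_base (X := X)
  have step : ∀ (k : ℕ) (P : PData X), ∃ (QM : PData X × ℕ), 0 < QM.2 ∧
      QM.1.c = (1/2 : ℝ)^(k+1) ∧ QM.1.N = P.N * QM.2 ∧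
      ∀ m < QM.1.N, (QM.1.U m ∩ P.U (m / QM.2)).Nonempty := by
    intro k P
    obtain ⟨Q, M, h1, h2, h3, h4⟩ := exists_refine P (pow_pos (by norm_num : (0:ℝ) < 1/2) (k+1))
    exact ⟨⟨Q, M⟩, h1, h2, h3, h4⟩
  choose QM hQM1 hQM2 hQM3 hQM4 using step
  set P : ℕ → PData X := fun k => Nat.rec P₀ (fun k Pk => (QM k Pk).1) k with hPdef
  set M : ℕ → ℕ := fun k => (QM k (P k)).2 with hMdef
  have hPsucc : ∀ k, P (k+1) = (QM k (P k)).1 := fun k => rfl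
  have hPc : ∀ k, (P k).c = (1/2 : ℝ)^k := by
    intro k
    cases k with
    | zero => simp only [pow_zero]; exact hP₀c
    | succ k => rw [hPsucc k]; exact hQM2 k (P k)
  have hMpos : ∀ k, 0 < M k := fun k => hQM1 k (P k)
  have hNsucc : ∀ k, (P (k+1)).N = (P k).N * M k := fun k => hQM3 k (P k)
  have hmeet : ∀ k m, m < (P (k+1)).N →
      ((P (k+1)).U m ∩ (P k).U (m / M k)).Nonempty := fun k => hQM4 k (P k)
  -- the approximating points
  set idx : ℕ → ℝ → ℕ := fun k t => min ⌊t * (P k).N⌋₊ ((P k).N - 1) with hidx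
  set x : ℕ → ℕ → X := fun k m => ((P k).conn m).nonempty.some with hxdef
  set pt : ℕ → ℝ → X := fun k t => x k (idx k t) with hpt
  have hxmem : ∀ k m, x k m ∈ (P k).U m := fun k m => ((P k).conn m).nonempty.some_mem
  have hidx_lt : ∀ k t, idx k t < (P k).N := by
    intro k t
    have := (P k).hN
    simp only [hidx]
    omega
  have hdiam : ∀ k m, Metric.diam ((P k).U m) ≤ (1/2 : ℝ)^k :=
    fun k m => (hPc k) ▸ (P k).small m
  have hidx_div : ∀ k t, idx (k+1) t / M k = idx k t := by
    intro k t
    have hMk : ((M k : ℕ) : ℝ) ≠ 0 := Nat.cast_ne_zero.mpr (hMpos k).ne'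
    have e : t * (((P k).N * M k : ℕ) : ℝ) / ((M k : ℕ) : ℝ) = t * ((P k).N : ℝ) := by
      push_cast
      field_simp
    have h1 : ⌊t * (((P k).N * M k : ℕ) : ℝ)⌋₊ / M k = ⌊t * ((P k).N : ℝ)⌋₊ := by
      rw [← Nat.floor_div_natCast, e]
    simp only [hidx, hNsucc k]
    rw [nat_min_div _ (hMpos k) (P k).hN, h1]
  have L2 : ∀ k t, dist (pt (k+1) t) (pt k t) ≤ (1/2:ℝ)^(k+1) + (1/2:ℝ)^k := by
    intro k t
    obtain ⟨z, hz1, hz2⟩ := hmeet k (idx (k+1) t) (hidx_lt (k+1) t)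
    rw [hidx_div k t] at hz2
    calc dist (pt (k+1) t) (pt k t)
        ≤ dist (pt (k+1) t) z + dist z (pt k t) := dist_triangle _ _ _
      _ ≤ (1/2:ℝ)^(k+1) + (1/2:ℝ)^k := by
          gcongr
          · exact le_trans (Metric.dist_le_diam_of_mem Metric.isBounded_of_compactSpace
              (hxmem (k+1) (idx (k+1) t)) hz1) (hdiam (k+1) _)
          · exact le_trans (Metric.dist_le_diam_of_mem Metric.isBounded_of_compactSpace
              hz2 (hxmem k (idx k t))) (hdiam k _)
  have L3 : ∀ k j t, k ≤ j →
      dist (pt j t) (pt k t) ≤ 3 * (1/2:ℝ)^k - 3 * (1/2:ℝ)^j := by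
    intro k j t hkj
    induction j with
    | zero =>
      obtain rfl : k = 0 := Nat.le_zero.mp hkj
      simp
    | succ j ih =>
      rcases Nat.lt_or_ge k (j+1) with h | h
      · have hkj' : k ≤ j := by omega
        have h1 := ih hkj'
        have h2 := L2 j t
        have h3 : (1/2:ℝ)^(j+1) = (1/2) * (1/2)^j := by ring
        calc dist (pt (j+1) t) (pt k t)
            ≤ dist (pt (j+1) t) (pt j t) + dist (pt j t) (pt k t) := dist_triangle _ _ _
          _ ≤ 3 * (1/2:ℝ)^k - 3 * (1/2:ℝ)^(j+1) := by linarith [h3]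
      · obtain rfl : k = j + 1 := by omega
        simp
  have hcauchy : ∀ t, ∃ y : X, Filter.Tendsto (fun k => pt k t) Filter.atTop (nhds y) := by
    intro t
    apply cauchySeq_tendsto_of_complete
    apply cauchySeq_of_le_geometric (1/2 : ℝ) 2 (by norm_num)
    intro n
    have := L2 n t
    have h3 : (1/2:ℝ)^(n+1) = (1/2) * (1/2)^n := by ring
    rw [dist_comm]
    nlinarith [pow_pos (by norm_num : (0:ℝ) < 1/2) n]
  choose f hf using hcauchy
  have hdistf : ∀ k t, dist (f t) (pt k t) ≤ 3 * (1/2:ℝ)^k := by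
    intro k t
    have htend : Filter.Tendsto (fun j => dist (pt j t) (pt k t)) Filter.atTop
        (nhds (dist (f t) (pt k t))) := (Continuous.dist continuous_id continuous_const).continuousAt.tendsto.comp (hf t)
    refine le_of_tendsto htend (Filter.eventually_atTop.mpr ⟨k, fun j hj => ?_⟩)
    have := L3 k j t hj
    have : (0:ℝ) < (1/2)^j := pow_pos (by norm_num) j
    linarith [L3 k j t hj]
  -- adjacent indices are close
  have L4 : ∀ k s t, idx k s ≤ idx k t + 1 → idx k t ≤ idx k s + 1 →
      dist (pt k s) (pt k t) ≤ 2 * (1/2:ℝ)^k := by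
    intro k s t h1 h2
    have key : ∀ m, dist (x k m) (x k (m+1)) ≤ 2 * (1/2:ℝ)^k := by
      intro m
      obtain ⟨z, hz1, hz2⟩ := (P k).link m
      calc dist (x k m) (x k (m+1)) ≤ dist (x k m) z + dist z (x k (m+1)) :=
            dist_triangle _ _ _
        _ ≤ (1/2:ℝ)^k + (1/2:ℝ)^k := by
            gcongr
            · exact le_trans (Metric.dist_le_diam_of_mem Metric.isBounded_of_compactSpace
                (hxmem _ _) hz1) (hdiam _ _)
            · exact le_trans (Metric.dist_le_diam_of_mem Metric.isBounded_of_compactSpace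
                hz2 (hxmem _ _)) (hdiam _ _)
        _ = 2 * (1/2:ℝ)^k := by ring
    rcases Nat.lt_trichotomy (idx k s) (idx k t) with h | h | h
    · simp only [hpt]
      rw [show idx k t = idx k s + 1 by omega]
      exact key _
    · simp only [hpt, h]
      rw [dist_self]
      positivity
    · simp only [hpt]
      rw [dist_comm, show idx k s = idx k t + 1 by omega]
      exact key _
  -- floor comparison
  have hfloorcmp : ∀ (u v : ℝ), u ≤ v + 1 → ⌊u⌋₊ ≤ ⌊v⌋₊ + 1 := by
    intro u v huv
    rcases le_or_gt 0 v with hv | hv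
    · calc ⌊u⌋₊ ≤ ⌊v + 1⌋₊ := Nat.floor_mono huv
        _ = ⌊v⌋₊ + 1 := Nat.floor_add_one hv
    · have : u ≤ 1 := by linarith
      calc ⌊u⌋₊ ≤ ⌊(1:ℝ)⌋₊ := Nat.floor_mono this
        _ = 1 := Nat.floor_one
        _ ≤ ⌊v⌋₊ + 1 := by omega
  have hidx_close : ∀ k (s t : ℝ), |s - t| * (P k).N ≤ 1 →
      idx k s ≤ idx k t + 1 ∧ idx k t ≤ idx k s + 1 := by
    intro k s t h
    have hN0 : (0:ℝ) ≤ ((P k).N : ℝ) := Nat.cast_nonneg _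
    have h1 : s * (P k).N ≤ t * (P k).N + 1 := by
      have e1 : (s - t) * (((P k).N : ℕ) : ℝ) ≤ |s - t| * (P k).N :=
        mul_le_mul_of_nonneg_right (le_abs_self _) hN0
      nlinarith
    have h2 : t * (P k).N ≤ s * (P k).N + 1 := by
      have e1 : (t - s) * (((P k).N : ℕ) : ℝ) ≤ |s - t| * (P k).N := by
        rw [abs_sub_comm]
        exact mul_le_mul_of_nonneg_right (le_abs_self _) hN0
      nlinarith
    have f1 := hfloorcmp _ _ h1
    have f2 := hfloorcmp _ _ h2
    simp only [hidx]
    omega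
  -- continuity
  have hcont : Continuous f := by
    rw [Metric.continuous_iff]
    intro b ε hε
    obtain ⟨k, hk⟩ : ∃ k : ℕ, (1/2:ℝ)^k < ε/8 := by
      obtain ⟨k, hk⟩ := exists_pow_lt_of_lt_one (by positivity : (0:ℝ) < ε/8)
        (by norm_num : (1/2:ℝ) < 1)
      exact ⟨k, hk⟩
    have hNpos : (0:ℝ) < ((P k).N : ℝ) := Nat.cast_pos.mpr (P k).hN
    refine ⟨1 / ((P k).N : ℝ), by positivity, ?_⟩
    intro a hab
    have hclose : |a - b| * (P k).N ≤ 1 := by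
      rw [Real.dist_eq] at hab
      rw [← le_div_iff₀ hNpos] at *
      exact le_of_lt hab
    obtain ⟨h1, h2⟩ := hidx_close k a b hclose
    calc dist (f a) (f b)
        ≤ dist (f a) (pt k a) + dist (pt k a) (pt k b) + dist (pt k b) (f b) :=
          dist_triangle4 _ _ _ _
      _ ≤ 3 * (1/2:ℝ)^k + 2 * (1/2:ℝ)^k + 3 * (1/2:ℝ)^k := by
          gcongr
          · exact hdistf k a
          · exact L4 k a b h1 h2
          · rw [dist_comm]; exact hdistf k b
      _ = 8 * (1/2:ℝ)^k := by ring
      _ < ε := by linarith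
  refine ⟨f, hcont, ?_⟩
  -- surjectivity
  have himgc : IsClosed (f '' Set.Icc (0:ℝ) 1) :=
    (isCompact_Icc.image hcont).isClosed
  rw [Set.eq_univ_iff_forall]
  intro p
  rw [← himgc.closure_eq]
  rw [Metric.mem_closure_iff]
  intro ε hε
  obtain ⟨k, hk⟩ : ∃ k : ℕ, (1/2:ℝ)^k < ε/4 := by
    obtain ⟨k, hk⟩ := exists_pow_lt_of_lt_one (by positivity : (0:ℝ) < ε/4)
      (by norm_num : (1/2:ℝ) < 1)
    exact ⟨k, hk⟩
  obtain ⟨i, hiN, hpU⟩ := (P k).covers p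
  have hNpos : (0:ℝ) < ((P k).N : ℝ) := Nat.cast_pos.mpr (P k).hN
  set t : ℝ := (i : ℝ) / ((P k).N : ℝ) with ht
  have htIcc : t ∈ Set.Icc (0:ℝ) 1 := by
    constructor
    · positivity
    · rw [ht, div_le_one hNpos]
      exact_mod_cast le_of_lt hiN
  have hidxt : idx k t = i := by
    have : t * ((P k).N : ℝ) = (i : ℝ) := by
      rw [ht]
      field_simp
    simp only [hidx, this, Nat.floor_natCast]
    omega
  refine ⟨f t, Set.mem_image_of_mem f htIcc, ?_⟩
  calc dist p (f t)
      ≤ dist p (pt k t) + dist (pt k t) (f t) := dist_triangle _ _ _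
    _ ≤ (1/2:ℝ)^k + 3 * (1/2:ℝ)^k := by
        gcongr
        · simp only [hpt]
          rw [hidxt]
          exact le_trans (Metric.dist_le_diam_of_mem Metric.isBounded_of_compactSpace
            hpU (hxmem k i)) (hdiam k i)
        · rw [dist_comm]
          exact hdistf k t
    _ = 4 * (1/2:ℝ)^k := by ring
    _ < ε := by linarith


end HM

section Forward

/-- A closed quotient map out of a locally connected space has locally
connected target. -/
lemma locallyConnectedSpace_of_closed_quotient {Y Z : Type*} [TopologicalSpace Y]
    [TopologicalSpace Z] [LocallyConnectedSpace Y] {q : Y → Z}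
    (hq : Topology.IsQuotientMap q) (hcl : IsClosedMap q) : LocallyConnectedSpace Z := by
  rw [locallyConnectedSpace_iff_connectedComponentIn_open]
  intro F hF z hz
  set C := connectedComponentIn F z with hC
  have hCF : C ⊆ F := connectedComponentIn_subset _ _
  have hsat : q ⁻¹' C = ⋃ y ∈ q ⁻¹' C, connectedComponentIn (q ⁻¹' F) y := by
    apply Set.Subset.antisymm
    · intro y hy
      exact Set.mem_biUnion hy (mem_connectedComponentIn (hCF hy))
    · rintro y hy
      simp only [Set.mem_iUnion] at hy
      obtain ⟨y', hy', hyy'⟩ := hy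
      have hsub : q '' connectedComponentIn (q ⁻¹' F) y' ⊆ connectedComponentIn F (q y') := by
        refine IsPreconnected.subset_connectedComponentIn
          ((isPreconnected_connectedComponentIn).image q hq.continuous.continuousOn)
          ⟨y', mem_connectedComponentIn (hCF hy'), rfl⟩ ?_
        rintro w ⟨u, hu, rfl⟩
        exact connectedComponentIn_subset (q ⁻¹' F) y' hu
      have heq : connectedComponentIn F z = connectedComponentIn F (q y') :=
        connectedComponentIn_eq hy'
      have : q y ∈ connectedComponentIn F (q y') := hsub ⟨y, hyy', rfl⟩
      rw [← heq] at this
      exact this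
  have hopen : IsOpen (q ⁻¹' C) := by
    rw [hsat]
    exact isOpen_biUnion fun y _ => (hF.preimage hq.continuous).connectedComponentIn
  have himg : IsClosed (q '' (q ⁻¹' C)ᶜ) := hcl _ hopen.isClosed_compl
  have hCeq : C = (q '' (q ⁻¹' C)ᶜ)ᶜ := by
    ext w
    constructor
    · rintro hw ⟨y, hy1, rfl⟩
      exact hy1 hw
    · intro hw
      obtain ⟨y, rfl⟩ := hq.surjective w
      by_contra hyC
      exact hw ⟨y, hyC, rfl⟩
  rw [hCeq]
  exact himg.isOpen_compl

/-- The unit interval (as a subspace of `ℝ`) is locally connected. -/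
lemma locallyConnectedSpace_Icc : LocallyConnectedSpace (Set.Icc (0:ℝ) 1) := by
  refine locallyConnectedSpace_of_connected_bases
    (fun x δ => (Subtype.val : Set.Icc (0:ℝ) 1 → ℝ) ⁻¹' Metric.ball x.val δ)
    (fun _ δ => 0 < δ) (fun x => ?_) (fun x δ hδ => ?_)
  · rw [nhds_induced]
    exact (Metric.nhds_basis_ball).comap _
  · rw [← Topology.IsInducing.subtypeVal.isPreconnected_image]
    rw [Subtype.image_preimage_coe]
    apply Set.OrdConnected.isPreconnected
    rw [Real.ball_eq_Ioo]
    exact Set.ordConnected_Icc.inter Set.ordConnected_Ioo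

end Forward

/-- **Hahn–Mazurkiewicz theorem.** A nonempty subset `A ⊆ ℝⁿ` is the image of a
continuous map `f : [0,1] → ℝⁿ` if and only if `A` is compact, connected, and
locally connected. -/
theorem hahn_mazurkiewicz (n : ℕ) (A : Set (EuclideanSpace ℝ (Fin n)))
    (hA : A.Nonempty) :
    (∃ f : ℝ → EuclideanSpace ℝ (Fin n),
        ContinuousOn f (Set.Icc (0 : ℝ) 1) ∧ f '' Set.Icc (0 : ℝ) 1 = A) ↔
      IsCompact A ∧ IsConnected A ∧ LocallyConnectedSpace A := by
  constructor
  · rintro ⟨f, hf, hfA⟩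
    have hc : IsCompact A := hfA ▸ isCompact_Icc.image_of_continuousOn hf
    have hconn : IsConnected A := hfA ▸ (isConnected_Icc (by norm_num : (0:ℝ) ≤ 1)).image f hf
    refine ⟨hc, hconn, ?_⟩
    haveI : LocallyConnectedSpace (Set.Icc (0:ℝ) 1) := locallyConnectedSpace_Icc
    haveI : CompactSpace (Set.Icc (0:ℝ) 1) := isCompact_iff_compactSpace.mp isCompact_Icc
    set g : Set.Icc (0:ℝ) 1 → A := fun t => ⟨f t.val, hfA ▸ Set.mem_image_of_mem f t.2⟩ with hg
    have hgc : Continuous g := by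
      apply Continuous.subtype_mk
      exact hf.restrict
    have hgs : Function.Surjective g := by
      rintro ⟨a, ha⟩
      rw [← hfA] at ha
      obtain ⟨t, ht, rfl⟩ := ha
      exact ⟨⟨t, ht⟩, rfl⟩
    exact locallyConnectedSpace_of_closed_quotient
      (IsClosedMap.isQuotientMap hgc.isClosedMap hgc hgs) hgc.isClosedMap
  · rintro ⟨hcomp, hconn, hloc⟩
    haveI : CompactSpace A := isCompact_iff_compactSpace.mp hcomp
    haveI : ConnectedSpace A := Subtype.connectedSpace hconn
    haveI : Nonempty A := hA.to_subtype
    obtain ⟨g, hgc, hgs⟩ := HM.exists_cont_surj (X := A)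
    refine ⟨fun t => (g t : EuclideanSpace ℝ (Fin n)),
      (continuous_subtype_val.comp hgc).continuousOn, ?_⟩
    have : (fun t => (g t : EuclideanSpace ℝ (Fin n))) '' Set.Icc (0:ℝ) 1 =
        Subtype.val '' (g '' Set.Icc (0:ℝ) 1) := by
      rw [Set.image_image]
    rw [this, hgs, Subtype.coe_image_univ]
end

section
/- Every nonempty compact subset of ℝ^n is the continuous image of the Cantor set (Hausdorff's theorem). -/
open Set Filter
open scoped Classical

namespace HCS


noncomputable def cdig (b : Bool) : ℝ := cond b 1 0

lemma cdig_nonneg (b : Bool) : 0 ≤ cdig b := by cases b <;> simp [cdig]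
lemma cdig_le_one (b : Bool) : cdig b ≤ 1 := by cases b <;> simp [cdig]

/-- generic digit sum with ratio ρ and digit weight v -/
noncomputable def dsum (v ρ : ℝ) (a : ℕ → Bool) : ℝ := ∑' i, v * cdig (a i) * ρ ^ (i + 1)

variable {v ρ : ℝ} (hv : 0 ≤ v) (hρ0 : 0 ≤ ρ) (hρ1 : ρ < 1)

include hv hρ0 in
lemma term_nonneg (b : Bool) (k : ℕ) : 0 ≤ v * cdig b * ρ ^ k :=
  mul_nonneg (mul_nonneg hv (cdig_nonneg _)) (pow_nonneg hρ0 _)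

include hv hρ0 in
lemma term_le (b : Bool) (k : ℕ) : v * cdig b * ρ ^ k ≤ v * ρ ^ k := by
  have : v * cdig b ≤ v * 1 := mul_le_mul_of_nonneg_left (cdig_le_one _) hv
  calc v * cdig b * ρ ^ k ≤ v * 1 * ρ ^ k :=
        mul_le_mul_of_nonneg_right this (pow_nonneg hρ0 _)
    _ = v * ρ ^ k := by ring

include hρ0 hρ1 in
lemma geom_shift_summable : Summable (fun i : ℕ => v * ρ ^ (i + 1)) :=
  ((summable_geometric_of_lt_one hρ0 hρ1).mul_left v).comp_injective (add_left_injective 1)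

include hv hρ0 hρ1 in
lemma dsum_summable (a : ℕ → Bool) : Summable (fun i => v * cdig (a i) * ρ ^ (i + 1)) :=
  Summable.of_nonneg_of_le (fun i => term_nonneg hv hρ0 _ _)
    (fun i => term_le hv hρ0 _ _) (geom_shift_summable hρ0 hρ1)

include hv hρ0 in
lemma dsum_nonneg (a : ℕ → Bool) : 0 ≤ dsum v ρ a :=
  tsum_nonneg (fun i => term_nonneg hv hρ0 _ _)

include hv hρ0 hρ1 in
lemma dsum_le (a : ℕ → Bool) : dsum v ρ a ≤ v * (ρ / (1 - ρ)) := by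
  have hgs : ∑' i : ℕ, v * ρ ^ (i + 1) = v * (ρ / (1-ρ)) := by
    rw [tsum_mul_left]
    congr 1
    have := tsum_geometric_of_lt_one hρ0 hρ1
    calc ∑' i : ℕ, ρ ^ (i+1) = ∑' i : ℕ, ρ * ρ ^ i := by
          congr 1; funext i; ring
      _ = ρ * (1 - ρ)⁻¹ := by rw [tsum_mul_left, this]
      _ = ρ / (1 - ρ) := by rw [div_eq_mul_inv]
  rw [← hgs]
  exact Summable.tsum_le_tsum (fun i => term_le hv hρ0 _ _) (dsum_summable hv hρ0 hρ1 a)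
    (geom_shift_summable hρ0 hρ1)

include hv hρ0 hρ1 in
lemma dsum_continuous : Continuous (dsum v ρ) := by
  apply continuous_tsum (u := fun i => v * ρ ^ (i+1))
  · intro i
    have : Continuous fun a : ℕ → Bool => a i := continuous_apply i
    exact ((continuous_of_discreteTopology (f := fun b : Bool => v * cdig b)).comp this).mul
      continuous_const
  · exact geom_shift_summable hρ0 hρ1
  · intro i a
    rw [Real.norm_eq_abs, abs_of_nonneg (term_nonneg hv hρ0 _ _)]
    exact term_le hv hρ0 _ _

include hv hρ0 hρ1 in
lemma dsum_tail (a : ℕ → Bool) :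
    dsum v ρ a = v * cdig (a 0) * ρ + ρ * dsum v ρ (fun i => a (i + 1)) := by
  unfold dsum
  rw [Summable.tsum_eq_zero_add (dsum_summable hv hρ0 hρ1 a)]
  congr 1
  · simp
  · rw [← tsum_mul_left]
    congr 1
    funext i
    ring

/-- cons -/
def consB (b : Bool) (a : ℕ → Bool) : ℕ → Bool := fun i => Nat.casesOn i b a

@[simp] lemma consB_zero (b : Bool) (a : ℕ → Bool) : consB b a 0 = b := rfl
@[simp] lemma consB_succ (b : Bool) (a : ℕ → Bool) (i : ℕ) : consB b a (i+1) = a i := rfl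
@[simp] lemma consB_tail (b : Bool) (a : ℕ → Bool) : (fun i => consB b a (i+1)) = a := rfl

include hv hρ0 hρ1 in
lemma dsum_consB (b : Bool) (a : ℕ → Bool) :
    dsum v ρ (consB b a) = v * cdig b * ρ + ρ * dsum v ρ a := by
  rw [dsum_tail hv hρ0 hρ1]
  simp


noncomputable def tern : (ℕ → Bool) → ℝ := dsum 2 (1/3)
noncomputable def bin : (ℕ → Bool) → ℝ := dsum 1 (1/2)

lemma tern_nonneg (a : ℕ → Bool) : 0 ≤ tern a := dsum_nonneg (by norm_num) (by norm_num) a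
lemma tern_le_one (a : ℕ → Bool) : tern a ≤ 1 := by
  have := dsum_le (v := 2) (ρ := 1/3) (by norm_num) (by norm_num) (by norm_num) a
  norm_num at this
  exact this

lemma bin_nonneg (a : ℕ → Bool) : 0 ≤ bin a := dsum_nonneg (by norm_num) (by norm_num) a
lemma bin_le_one (a : ℕ → Bool) : bin a ≤ 1 := by
  have := dsum_le (v := 1) (ρ := 1/2) (by norm_num) (by norm_num) (by norm_num) a
  norm_num at this
  exact this

lemma tern_continuous : Continuous tern :=
  dsum_continuous (by norm_num) (by norm_num) (by norm_num)
lemma bin_continuous : Continuous bin :=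
  dsum_continuous (by norm_num) (by norm_num) (by norm_num)

lemma tern_tail (a : ℕ → Bool) :
    tern a = 2 * cdig (a 0) / 3 + tern (fun i => a (i+1)) / 3 := by
  have := dsum_tail (v := 2) (ρ := 1/3) (by norm_num) (by norm_num) (by norm_num) a
  unfold tern
  rw [this]
  ring

lemma bin_tail (a : ℕ → Bool) :
    bin a = cdig (a 0) / 2 + bin (fun i => a (i+1)) / 2 := by
  have := dsum_tail (v := 1) (ρ := 1/2) (by norm_num) (by norm_num) (by norm_num) a
  unfold bin
  rw [this]
  ring

lemma tern_consB (b : Bool) (a : ℕ → Bool) :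
    tern (consB b a) = 2 * cdig b / 3 + tern a / 3 := by
  rw [tern_tail]
  simp

lemma bin_consB (b : Bool) (a : ℕ → Bool) :
    bin (consB b a) = cdig b / 2 + bin a / 2 := by
  rw [bin_tail]
  simp

lemma consB_eta (a : ℕ → Bool) : consB (a 0) (fun i => a (i+1)) = a := by
  funext i
  cases i <;> rfl

/-- first digit determined -/
lemma tern_first (a b : ℕ → Bool) (h : tern a = tern b) : a 0 = b 0 := by
  have key : ∀ x y : ℕ → Bool, x 0 = true → y 0 = false → tern x ≠ tern y := by
    intro x y hx hy
    have h1 := tern_tail x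
    have h2 := tern_tail y
    rw [hx] at h1; rw [hy] at h2
    simp [cdig] at h1 h2
    have b1 := tern_nonneg (fun i => x (i+1))
    have b2 := tern_le_one (fun i => y (i+1))
    intro hc
    rw [h1, h2] at hc
    linarith
  cases ha : a 0 <;> cases hb : b 0
  · rfl
  · exact absurd h.symm (key b a hb ha)
  · exact absurd h (key a b ha hb)
  · rfl

lemma tern_injective : Function.Injective tern := by
  have key : ∀ k, ∀ a b : ℕ → Bool, tern a = tern b → a k = b k := by
    intro k
    induction k with
    | zero => exact tern_first
    | succ k ih =>
      intro a b h
      have h0 := tern_first a b h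
      have h1 := tern_tail a
      have h2 := tern_tail b
      rw [h0] at h1
      have : tern (fun i => a (i+1)) = tern (fun i => b (i+1)) := by
        rw [h1, h2] at h
        linarith
      exact ih _ _ this
  intro a b h
  funext k
  exact key k a b h

lemma tern_mem_preCantorSet (n : ℕ) (a : ℕ → Bool) : tern a ∈ preCantorSet n := by
  induction n generalizing a with
  | zero =>
    exact ⟨tern_nonneg a, tern_le_one a⟩
  | succ n ih =>
    rw [← consB_eta a, preCantorSet_succ]
    cases h : a 0
    · left
      exact ⟨tern (fun i => a (i+1)), ih _, by rw [tern_consB]; simp [cdig]; try ring⟩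
    · right
      exact ⟨tern (fun i => a (i+1)), ih _, by rw [tern_consB]; simp [cdig]; try ring⟩

lemma tern_mem_cantorSet (a : ℕ → Bool) : tern a ∈ cantorSet :=
  Set.mem_iInter.mpr (fun n => tern_mem_preCantorSet n a)

lemma tern_approx (n : ℕ) : ∀ x ∈ preCantorSet n, ∃ a, |x - tern a| ≤ (1/3 : ℝ) ^ n := by
  induction n with
  | zero =>
    rintro x ⟨h0, h1⟩
    refine ⟨fun _ => false, ?_⟩
    have : tern (fun _ => false) = 0 := by
      have h := tern_tail (fun _ => false)
      simp [cdig] at h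
      linarith
    rw [this]
    simp [abs_of_nonneg h0]
    exact h1
  | succ n ih =>
    rintro x (⟨y, hy, rfl⟩ | ⟨y, hy, rfl⟩)
    · obtain ⟨a, ha⟩ := ih y hy
      refine ⟨consB false a, ?_⟩
      rw [tern_consB]
      simp only [cdig, cond]
      have : y / 3 - (2 * 0 / 3 + tern a / 3) = (y - tern a) / 3 := by ring
      rw [this, abs_div]
      simp only [abs_of_nonneg (by norm_num : (0:ℝ) ≤ 3)]
      rw [pow_succ]
      calc |y - tern a| / 3 ≤ (1/3:ℝ)^n / 3 := by gcongr
        _ = (1/3:ℝ)^n * (1/3) := by ring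
    · obtain ⟨a, ha⟩ := ih y hy
      refine ⟨consB true a, ?_⟩
      rw [tern_consB]
      simp only [cdig, cond]
      have : (2 + y) / 3 - (2 * 1 / 3 + tern a / 3) = (y - tern a) / 3 := by ring
      rw [this, abs_div]
      simp only [abs_of_nonneg (by norm_num : (0:ℝ) ≤ 3)]
      rw [pow_succ]
      calc |y - tern a| / 3 ≤ (1/3:ℝ)^n / 3 := by gcongr
        _ = (1/3:ℝ)^n * (1/3) := by ring

lemma tern_range : Set.range tern = cantorSet := by
  apply Set.Subset.antisymm
  · rintro x ⟨a, rfl⟩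
    exact tern_mem_cantorSet a
  · intro x hx
    have hclosed : IsClosed (Set.range tern) :=
      (isCompact_range tern_continuous).isClosed
    rw [← hclosed.closure_eq]
    rw [Metric.mem_closure_iff]
    intro ε hε
    obtain ⟨n, hn⟩ := exists_pow_lt_of_lt_one hε (by norm_num : (1/3 : ℝ) < 1)
    obtain ⟨a, ha⟩ := tern_approx n x (Set.mem_iInter.mp hx n)
    exact ⟨tern a, Set.mem_range_self a, lt_of_le_of_lt (by rwa [Real.dist_eq]) hn⟩

/-- binary expansion surjectivity onto [0,1] -/
lemma bin_approx (n : ℕ) : ∀ x ∈ Set.Icc (0:ℝ) 1, ∃ a, |x - bin a| ≤ (1/2 : ℝ) ^ n := by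
  induction n with
  | zero =>
    rintro x ⟨h0, h1⟩
    refine ⟨fun _ => false, ?_⟩
    have : bin (fun _ => false) = 0 := by
      have h := bin_tail (fun _ => false)
      simp [cdig] at h
      linarith
    rw [this]
    simp [abs_of_nonneg h0]
    exact h1
  | succ n ih =>
    rintro x ⟨h0, h1⟩
    rcases le_or_gt x (1/2) with hhalf | hhalf
    · obtain ⟨a, ha⟩ := ih (2*x) ⟨by linarith, by linarith⟩
      refine ⟨consB false a, ?_⟩
      rw [bin_consB]
      simp only [cdig, cond]
      have : x - (0 / 2 + bin a / 2) = (2*x - bin a) / 2 := by ring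
      rw [this, abs_div]
      simp only [abs_of_nonneg (by norm_num : (0:ℝ) ≤ 2)]
      rw [pow_succ]
      calc |2*x - bin a| / 2 ≤ (1/2:ℝ)^n / 2 := by gcongr
        _ = (1/2:ℝ)^n * (1/2) := by ring
    · obtain ⟨a, ha⟩ := ih (2*x - 1) ⟨by linarith, by linarith⟩
      refine ⟨consB true a, ?_⟩
      rw [bin_consB]
      simp only [cdig, cond]
      have : x - (1 / 2 + bin a / 2) = ((2*x - 1) - bin a) / 2 := by ring
      rw [this, abs_div]
      simp only [abs_of_nonneg (by norm_num : (0:ℝ) ≤ 2)]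
      rw [pow_succ]
      calc |(2*x-1) - bin a| / 2 ≤ (1/2:ℝ)^n / 2 := by gcongr
        _ = (1/2:ℝ)^n * (1/2) := by ring

lemma bin_surj : Set.Icc (0:ℝ) 1 ⊆ Set.range bin := by
  intro x hx
  have hclosed : IsClosed (Set.range bin) :=
    (isCompact_range bin_continuous).isClosed
  rw [← hclosed.closure_eq, Metric.mem_closure_iff]
  intro ε hε
  obtain ⟨n, hn⟩ := exists_pow_lt_of_lt_one hε (by norm_num : (1/2 : ℝ) < 1)
  obtain ⟨a, ha⟩ := bin_approx n x hx
  exact ⟨bin a, Set.mem_range_self a, lt_of_le_of_lt (by rwa [Real.dist_eq]) hn⟩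


variable (S : Set (ℕ → Bool))

def extOK (l : List Bool) : Prop := ∃ y ∈ S, ∀ i < l.length, y i = l.getD i false

noncomputable def Lpre (x : ℕ → Bool) : ℕ → List Bool
  | 0 => []
  | n + 1 => Lpre x n ++ [if extOK S (Lpre x n ++ [x n]) then x n else !x n]

noncomputable def ret (x : ℕ → Bool) (n : ℕ) : Bool := (Lpre S x (n+1)).getD n false

lemma Lpre_length (x : ℕ → Bool) (n : ℕ) : (Lpre S x n).length = n := by
  induction n with
  | zero => rfl
  | succ n ih => simp [Lpre, ih]

lemma getD_append_lt (l : List Bool) (l' : List Bool) (i : ℕ) (h : i < l.length) :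
    (l ++ l').getD i false = l.getD i false := by
  rw [List.getD_eq_getElem?_getD, List.getD_eq_getElem?_getD,
    List.getElem?_append_left h]

lemma getD_append_self (l : List Bool) (b : Bool) (n : ℕ) (h : l.length = n) :
    (l ++ [b]).getD n false = b := by
  subst h
  rw [List.getD_eq_getElem?_getD, List.getElem?_append_right (le_refl _)]
  simp

lemma Lpre_getD (x : ℕ → Bool) (n i : ℕ) (h : i < n) :
    (Lpre S x n).getD i false = ret S x i := by
  induction n with
  | zero => omega
  | succ n ih =>
    rcases Nat.lt_succ_iff_lt_or_eq.mp h with h' | rfl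
    · show (Lpre S x n ++ _).getD i false = _
      rw [getD_append_lt _ _ _ (by rw [Lpre_length]; exact h'), ih h']
    · rfl

lemma extOK_Lpre (hne : S.Nonempty) (x : ℕ → Bool) (n : ℕ) : extOK S (Lpre S x n) := by
  induction n with
  | zero => exact ⟨hne.some, hne.some_mem, by simp [Lpre]⟩
  | succ n ih =>
    by_cases hext : extOK S (Lpre S x n ++ [x n])
    · show extOK S (Lpre S x n ++ [_])
      rw [if_pos hext]
      exact hext
    · obtain ⟨y, hy, hagree⟩ := ih
      have hyn : y n = !x n := by
        by_contra hyn
        have hyx : y n = x n := by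
          cases hxv : x n <;> cases hyv : y n <;> simp_all
        apply hext
        refine ⟨y, hy, ?_⟩
        intro i hi
        rw [List.length_append, Lpre_length] at hi
        simp only [List.length_cons, List.length_nil] at hi
        rcases Nat.lt_succ_iff_lt_or_eq.mp (by omega : i < n + 1) with h' | rfl
        · rw [getD_append_lt _ _ _ (by rw [Lpre_length]; exact h')]
          exact hagree i (by rw [Lpre_length]; exact h')
        · rw [getD_append_self _ _ _ (Lpre_length S x i)]
          exact hyx
      show extOK S (Lpre S x n ++ [_])
      rw [if_neg hext]
      refine ⟨y, hy, ?_⟩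
      intro i hi
      rw [List.length_append, Lpre_length] at hi
      simp only [List.length_cons, List.length_nil] at hi
      rcases Nat.lt_succ_iff_lt_or_eq.mp (by omega : i < n + 1) with h' | rfl
      · rw [getD_append_lt _ _ _ (by rw [Lpre_length]; exact h')]
        exact hagree i (by rw [Lpre_length]; exact h')
      · rw [getD_append_self _ _ _ (Lpre_length S x i)]
        exact hyn

lemma ret_mem (hS : IsClosed S) (hne : S.Nonempty) (x : ℕ → Bool) : ret S x ∈ S := by
  have key : ∀ n, ∃ y ∈ S, ∀ i < n, y i = ret S x i := by
    intro n
    obtain ⟨y, hy, hagree⟩ := extOK_Lpre S hne x n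
    refine ⟨y, hy, fun i hi => ?_⟩
    rw [hagree i (by rw [Lpre_length]; exact hi), Lpre_getD S x n i hi]
  choose φ hφS hφ using key
  have htend : Tendsto φ atTop (nhds (ret S x)) := by
    rw [tendsto_pi_nhds]
    intro i
    apply tendsto_const_nhds.congr'
    filter_upwards [eventually_ge_atTop (i+1)] with n hn
    exact (hφ n i (by omega)).symm
  exact hS.mem_of_tendsto htend (Eventually.of_forall hφS)

lemma ret_fix (x : ℕ → Bool) (hx : x ∈ S) : ret S x = x := by
  have key : ∀ n, ∀ i < n, (Lpre S x n).getD i false = x i := by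
    intro n
    induction n with
    | zero => omega
    | succ n ih =>
      have hext : extOK S (Lpre S x n ++ [x n]) := by
        refine ⟨x, hx, ?_⟩
        intro i hi
        rw [List.length_append, Lpre_length] at hi
        simp only [List.length_cons, List.length_nil] at hi
        rcases Nat.lt_succ_iff_lt_or_eq.mp (by omega : i < n + 1) with h' | rfl
        · rw [getD_append_lt _ _ _ (by rw [Lpre_length]; exact h')]
          exact (ih i h').symm
        · rw [getD_append_self _ _ _ (Lpre_length S x i)]
      intro i hi
      show (Lpre S x n ++ [_]).getD i false = x i
      rw [if_pos hext]
      rcases Nat.lt_succ_iff_lt_or_eq.mp hi with h' | rfl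
      · rw [getD_append_lt _ _ _ (by rw [Lpre_length]; exact h')]
        exact ih i h'
      · rw [getD_append_self _ _ _ (Lpre_length S x i)]
  funext n
  exact key (n+1) n (by omega)

lemma Lpre_congr (x y : ℕ → Bool) (n : ℕ) (h : ∀ i < n, x i = y i) :
    Lpre S x n = Lpre S y n := by
  induction n with
  | zero => rfl
  | succ n ih =>
    have hn : Lpre S x n = Lpre S y n := ih (fun i hi => h i (by omega))
    show Lpre S x n ++ _ = Lpre S y n ++ _
    rw [hn, h n (by omega)]

lemma ret_continuous : Continuous (ret S) := by
  apply continuous_pi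
  intro n
  let G : (Fin (n+1) → Bool) → (ℕ → Bool) := fun v i => if h : i < n + 1 then v ⟨i, h⟩ else false
  have hfac : (fun x => ret S x n) =
      (fun v => ret S (G v) n) ∘ (fun x (i : Fin (n+1)) => x i) := by
    funext x
    simp only [Function.comp]
    unfold ret
    rw [Lpre_congr S x (G fun i : Fin (n+1) => x i) (n+1)
      (fun i hi => by simp [G, dif_pos hi]; intro; omega)]
  rw [hfac]
  exact (continuous_of_discreteTopology).comp (continuous_pi fun i : Fin (n+1) => continuous_apply (i : ℕ))



def splitB (n : ℕ) (b : ℕ → Bool) (j : Fin n) : ℕ → Bool := fun i => b (n * i + j)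

noncomputable def joinB (n : ℕ) (c : Fin n → ℕ → Bool) : ℕ → Bool :=
  fun k => if h : 0 < n then c ⟨k % n, Nat.mod_lt _ h⟩ (k / n) else false

lemma splitB_joinB (n : ℕ) (c : Fin n → ℕ → Bool) (j : Fin n) :
    splitB n (joinB n c) j = c j := by
  funext i
  have hn : 0 < n := j.pos
  unfold splitB joinB
  rw [dif_pos hn]
  have h1 : (n * i + (j : ℕ)) % n = (j : ℕ) := by
    rw [Nat.mul_add_mod, Nat.mod_eq_of_lt j.isLt]
  have h2 : (n * i + (j : ℕ)) / n = i := by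
    rw [Nat.mul_add_div hn, Nat.div_eq_of_lt j.isLt, add_zero]
  have hfin : (⟨(n * i + (j : ℕ)) % n, Nat.mod_lt _ hn⟩ : Fin n) = j := Fin.ext h1
  rw [hfin, h2]

lemma splitB_continuous (n : ℕ) (j : Fin n) : Continuous (fun b => splitB n b j) :=
  continuous_pi fun i => continuous_apply _

noncomputable def Phi (n : ℕ) (M : ℝ) (b : ℕ → Bool) : EuclideanSpace ℝ (Fin n) :=
  (EuclideanSpace.equiv (Fin n) ℝ).symm (fun j => 2 * M * bin (splitB n b j) - M)

lemma Phi_continuous (n : ℕ) (M : ℝ) : Continuous (Phi n M) := by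
  apply (EuclideanSpace.equiv (Fin n) ℝ).symm.continuous.comp
  exact continuous_pi fun j =>
    ((continuous_const.mul (bin_continuous.comp (splitB_continuous n j))).sub continuous_const)

lemma Phi_apply (n : ℕ) (M : ℝ) (b : ℕ → Bool) (j : Fin n) :
    Phi n M b j = 2 * M * bin (splitB n b j) - M := rfl

lemma coord_le_norm {n : ℕ} (x : EuclideanSpace ℝ (Fin n)) (j : Fin n) : |x j| ≤ ‖x‖ := by
  rw [EuclideanSpace.norm_eq]
  have h1 : |x j| = Real.sqrt ((x j) ^ 2) := (Real.sqrt_sq_eq_abs _).symm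
  rw [h1]
  apply Real.sqrt_le_sqrt
  calc (x j) ^ 2 = ‖x j‖ ^ 2 := by rw [Real.norm_eq_abs, sq_abs]
    _ ≤ ∑ i, ‖x i‖ ^ 2 := Finset.single_le_sum (f := fun i => ‖x i‖ ^ 2)
        (fun i _ => sq_nonneg _) (Finset.mem_univ j)

lemma Phi_cover (n : ℕ) (M : ℝ) (hM : 0 < M) (x : EuclideanSpace ℝ (Fin n))
    (hx : ‖x‖ ≤ M) : x ∈ Set.range (Phi n M) := by
  have hcoord : ∀ j, (x j + M) / (2 * M) ∈ Set.Icc (0:ℝ) 1 := by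
    intro j
    have h := abs_le.mp ((coord_le_norm x j).trans hx)
    constructor
    · apply div_nonneg (by linarith [h.1]) (by linarith)
    · rw [div_le_one (by linarith)]
      linarith [h.2]
  have hc : ∀ j, ∃ a : ℕ → Bool, bin a = (x j + M) / (2 * M) := by
    intro j
    obtain ⟨a, ha⟩ := bin_surj (hcoord j)
    exact ⟨a, ha⟩
  choose c hc using hc
  refine ⟨joinB n c, ?_⟩
  have : ∀ j, Phi n M (joinB n c) j = x j := by
    intro j
    rw [Phi_apply, splitB_joinB, hc j]
    field_simp
    ring
  ext j
  exact this j


noncomputable def ternHomeo : (ℕ → Bool) ≃ₜ (Set.range tern) :=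
  Continuous.homeoOfEquivCompactToT2 (f := Equiv.ofInjective tern tern_injective)
    (tern_continuous.subtype_mk _)

noncomputable def cMap : ℝ → (ℕ → Bool) :=
  fun x => if h : x ∈ Set.range tern then ternHomeo.symm ⟨x, h⟩ else fun _ => false

lemma cMap_continuousOn : ContinuousOn cMap cantorSet := by
  rw [← tern_range, continuousOn_iff_continuous_restrict]
  have : (Set.range tern).restrict cMap = fun y => ternHomeo.symm y := by
    funext y
    exact dif_pos y.2
  change Continuous ((Set.range tern).restrict cMap)
  rw [this]
  exact ternHomeo.symm.continuous

lemma cMap_tern (a : ℕ → Bool) : cMap (tern a) = a := by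
  unfold cMap
  rw [dif_pos (Set.mem_range_self a)]
  have h1 : (⟨tern a, Set.mem_range_self a⟩ : Set.range tern) = ternHomeo a := rfl
  rw [h1, Homeomorph.symm_apply_apply]

end HCS

open HCS in
/-- **Hausdorff's theorem.** Every nonempty compact subset of `ℝⁿ` is the
continuous image of the middle-thirds Cantor set. -/
theorem hausdorff_cantor_surjection (n : ℕ) (A : Set (EuclideanSpace ℝ (Fin n)))
    (hA : A.Nonempty) (hAc : IsCompact A) :
    ∃ g : ℝ → EuclideanSpace ℝ (Fin n),
      ContinuousOn g cantorSet ∧ g '' cantorSet = A := by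
  obtain ⟨r, hr⟩ := hAc.isBounded.subset_closedBall 0
  set M : ℝ := |r| + 1 with hM
  have hM0 : 0 < M := by positivity
  have hnorm : ∀ x ∈ A, ‖x‖ ≤ M := by
    intro x hx
    have := hr hx
    rw [Metric.mem_closedBall, dist_zero_right] at this
    calc ‖x‖ ≤ r := this
      _ ≤ |r| := le_abs_self r
      _ ≤ M := by rw [hM]; linarith
  set S : Set (ℕ → Bool) := Phi n M ⁻¹' A with hS
  have hSclosed : IsClosed S := hAc.isClosed.preimage (Phi_continuous n M)
  have hSne : S.Nonempty := by
    obtain ⟨x0, hx0⟩ := hA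
    obtain ⟨b, hb⟩ := Phi_cover n M hM0 x0 (hnorm x0 hx0)
    exact ⟨b, by rw [hS, Set.mem_preimage, hb]; exact hx0⟩
  refine ⟨fun x => Phi n M (ret S (cMap x)), ?_, ?_⟩
  · exact ((Phi_continuous n M).comp (ret_continuous S)).comp_continuousOn cMap_continuousOn
  · apply Set.Subset.antisymm
    · rintro y ⟨x, hx, rfl⟩
      exact ret_mem S hSclosed hSne (cMap x)
    · intro y hy
      obtain ⟨b, hb⟩ := Phi_cover n M hM0 y (hnorm y hy)
      have hbS : b ∈ S := by rw [hS, Set.mem_preimage, hb]; exact hy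
      refine ⟨tern b, tern_mem_cantorSet b, ?_⟩
      show Phi n M (ret S (cMap (tern b))) = y
      rw [cMap_tern, ret_fix S b hbS, hb]
end

section
/- Any bijective map f : [0,1] → [0,1]^2 is discontinuous (Netto's theorem). -/
open Set

/-- **Netto's theorem.** No bijection from `[0,1]` onto `[0,1]²` is
continuous. -/
theorem netto (f : ℝ → ℝ × ℝ)
    (hbij : Set.BijOn f (Set.Icc (0 : ℝ) 1) (Set.Icc (0 : ℝ) 1 ×ˢ Set.Icc (0 : ℝ) 1)) :
    ¬ ContinuousOn f (Set.Icc (0 : ℝ) 1) := by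
  intro hcont
  classical
  set I : Set ℝ := Set.Icc (0 : ℝ) 1 with hI
  set S : Set (ℝ × ℝ) := I ×ˢ I with hS
  -- the restricted map as an equiv of subtypes
  have hmaps : MapsTo f I S := hbij.mapsTo
  have hFc : Continuous (hmaps.restrict f I S) := hcont.mapsToRestrict hmaps
  have hFbij : Function.Bijective (hmaps.restrict f I S) := by
    constructor
    · intro a b hab
      apply Subtype.ext
      exact hbij.injOn a.2 b.2 (congrArg Subtype.val hab)
    · rintro ⟨y, hy⟩
      obtain ⟨x, hx, hfx⟩ := hbij.surjOn hy
      exact ⟨⟨x, hx⟩, Subtype.ext hfx⟩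
  let E : I ≃ S := Equiv.ofBijective _ hFbij
  have hEc : Continuous E := hFc
  let h : I ≃ₜ S := hEc.homeoOfEquivCompactToT2
  -- the point of S with coordinates (s, t)
  have hmem : ∀ (s t : I), ((s : ℝ), (t : ℝ)) ∈ S := fun s t => ⟨s.2, t.2⟩
  let P : I → I → ℝ := fun t s => (h.symm ⟨((s : ℝ), (t : ℝ)), hmem s t⟩ : ℝ)
  have hPinj : ∀ t s t' s', P t s = P t' s' → s = s' ∧ t = t' := by
    intro t s t' s' hps
    have := h.symm.injective (Subtype.ext hps)
    have h2 := congrArg Subtype.val this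
    simp only [Prod.mk.injEq] at h2
    exact ⟨Subtype.ext h2.1, Subtype.ext h2.2⟩
  -- extended continuous map
  let q : I → ℝ → ℝ := fun t s => P t (Set.projIcc 0 1 zero_le_one s)
  have hqc : ∀ t, Continuous (q t) := by
    intro t
    have hin : Continuous fun s : I => P t s :=
      continuous_subtype_val.comp (h.symm.continuous.comp
        ((continuous_subtype_val.prodMk continuous_const).subtype_mk _))
    exact hin.comp continuous_projIcc
  -- the image sets
  let K : I → Set ℝ := fun t => q t '' I
  have hKconn : ∀ t, IsPreconnected (K t) :=
    fun t => isPreconnected_Icc.image _ (hqc t).continuousOn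
  have hK0 : ∀ t, q t 0 ∈ K t := fun t => ⟨0, left_mem_Icc.2 zero_le_one, rfl⟩
  have hK1 : ∀ t, q t 1 ∈ K t := fun t => ⟨1, right_mem_Icc.2 zero_le_one, rfl⟩
  have hne : ∀ t, q t 0 ≠ q t 1 := by
    intro t hq
    have := (hPinj t _ t _ hq).1
    have := congrArg Subtype.val this
    simp [Set.projIcc_left, Set.projIcc_right] at this
  -- pick a rational in each K t
  have hrat : ∀ t : I, ∃ r : ℚ, (r : ℝ) ∈ K t := by
    intro t
    rcases lt_or_gt_of_ne (hne t) with hlt | hlt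
    · obtain ⟨r, hr1, hr2⟩ := exists_rat_btwn hlt
      exact ⟨r, ((hKconn t).ordConnected).out (hK0 t) (hK1 t) ⟨hr1.le, hr2.le⟩⟩
    · obtain ⟨r, hr1, hr2⟩ := exists_rat_btwn hlt
      exact ⟨r, ((hKconn t).ordConnected).out (hK1 t) (hK0 t) ⟨hr1.le, hr2.le⟩⟩
  choose Q hQ using hrat
  have hQinj : Function.Injective Q := by
    intro t t' hq
    obtain ⟨s, _, hs⟩ := hQ t
    obtain ⟨s', _, hs'⟩ := hQ t'
    have : P t _ = P t' _ := hs.trans (by rw [hq, ← hs'])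
    exact (hPinj _ _ _ _ this).2
  have : Countable I := hQinj.countable
  have hIc : (I : Set ℝ).Countable := Set.countable_coe_iff.mp this
  have := hIc.measure_zero MeasureTheory.volume
  rw [hI, Real.volume_Icc] at this
  norm_num at this
end
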